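/- arXiv:2101.07276 — 5 statements merged into one kernel-verified Lean document; each statement's English description precedes it below -/
import Mathlib

section
/- Let A = σ^{α_1}_1 σ^{α_2}_2 ⋯ σ^{α_L}_L with α_k ∈ {0,x,y,z} (σ^0 denoting the identity), where 1 ≤ L ≤ N−2, and suppose at least one α_k ∈ {y,z}. Then |⟨g_1| A |g_2⟩| ≤ (L+1)²/N. -/
open Complex BigOperators Finset

namespace SpinChain

/-- Spin configurations on `N` sites (sites mod `N`): `true` = +1, `false` = −1. -/
abbrev Config (N : ℕ) := ZMod N → Bool

/-- The Hilbert space `H_N`: complex functions on spin configurations. -/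
abbrev HS (N : ℕ) := Config N → ℂ

/-- The ±1 value of a spin. -/
def sgn (b : Bool) : ℂ := if b then 1 else -1

/-- Standard basis vector `e_s`. -/
def basis (N : ℕ) [NeZero N] (s : Config N) : HS N := fun t => if t = s then 1 else 0

/-- Inner product `⟨f|g⟩ = ∑_s conj (f s) * g s` (antilinear in the first argument). -/
noncomputable def braket (N : ℕ) [NeZero N] (f g : HS N) : ℂ :=
  ∑ s, (starRingEnd ℂ) (f s) * g s

/-- Flip the spin at site `j`. -/
def flipAt (N : ℕ) (j : ZMod N) (s : Config N) : Config N :=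
  Function.update s j (!(s j))

/-- Pauli operator σ^x_j : acts diagonally, `σ^x_j e_s = s(j) e_s`. -/
def sigmaX (N : ℕ) (j : ZMod N) : Module.End ℂ (HS N) where
  toFun f := fun s => sgn (s j) * f s
  map_add' f g := by funext s; simp [mul_add]
  map_smul' c f := by funext s; simp [smul_eq_mul]; ring

/-- Pauli operator σ^z_j : flips the spin at site `j`, `σ^z_j e_s = e_{s'}`. -/
def sigmaZ (N : ℕ) (j : ZMod N) : Module.End ℂ (HS N) where
  toFun f := fun s => f (flipAt N j s)
  map_add' _ _ := rfl
  map_smul' _ _ := rfl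

/-- Pauli operator σ^y_j = i σ^x_j σ^z_j. -/
noncomputable def sigmaY (N : ℕ) (j : ZMod N) : Module.End ℂ (HS N) :=
  Complex.I • (sigmaX N j * sigmaZ N j)

/-- Kinds of single-site operators: the identity and the three Pauli matrices. -/
inductive PKind | id | x | y | z
  deriving DecidableEq

/-- Single-site operator of a given kind at site `j`. -/
noncomputable def pauli (N : ℕ) : PKind → ZMod N → Module.End ℂ (HS N)
  | PKind.id => fun _ => 1
  | PKind.x => sigmaX N
  | PKind.y => sigmaY N
  | PKind.z => sigmaZ N

/-- Parity operator Π^α = σ^α_1 σ^α_2 ⋯ σ^α_N. -/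
noncomputable def parity (N : ℕ) (α : PKind) : Module.End ℂ (HS N) :=
  ((List.range N).map (fun j => pauli N α ((j + 1 : ℕ) : ZMod N))).prod

/-- The configuration of the kink state |j⟩: `s(j+r) = (−1)^{r+1}` for `r = 1,…,N`
(the single ferromagnetic bond is between sites `j` and `j+1`). -/
def kinkConfig (N : ℕ) (j : ZMod N) : Config N :=
  fun k => ((k - j).val == 0) || ((k - j).val % 2 == 1)

/-- Kink state |j⟩. -/
def kink (N : ℕ) [NeZero N] (j : ZMod N) : HS N := basis N (kinkConfig N j)

/-- Momentum state `|s_p⟩ = N^{-1/2} ∑_{j=1}^N e^{i p j} |j⟩`. -/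
noncomputable def momState (N : ℕ) [NeZero N] (p : ℝ) : HS N :=
  (Real.sqrt N : ℂ)⁻¹ • ∑ j ∈ Finset.range N,
    Complex.exp (Complex.I * p * ((j : ℂ) + 1)) • kink N ((j + 1 : ℕ) : ZMod N)


-- ====== auxiliary development ======

/-- Flip spins according to a mask. -/
def maskFlip (N : ℕ) (m : ZMod N → Bool) (s : Config N) : Config N :=
  fun k => xor (s k) (m k)

lemma maskFlip_maskFlip (N : ℕ) (m m' : ZMod N → Bool) (s : Config N) :
    maskFlip N m (maskFlip N m' s) = maskFlip N (fun k => xor (m k) (m' k)) s := by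
  funext k
  show ((s k ^^ m' k) ^^ m k) = (s k ^^ (m k ^^ m' k))
  cases s k <;> cases m k <;> cases m' k <;> rfl

lemma maskFlip_invol (N : ℕ) (m : ZMod N → Bool) (s : Config N) :
    maskFlip N m (maskFlip N m s) = s := by
  funext k; simp [maskFlip]

lemma maskFlip_congr (N : ℕ) {m m' : ZMod N → Bool} (h : ∀ k, m k = m' k) (s : Config N) :
    maskFlip N m s = maskFlip N m' s := by
  funext k; unfold maskFlip; rw [h k]

/-- A linear map is a "Pauli product with mask m" if it acts as
    `(P f) t = c t * f (t ⊕ m)` with phases of modulus ≤ 1. -/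
def IsPP (N : ℕ) (P : Module.End ℂ (HS N)) (m : ZMod N → Bool) : Prop :=
  ∃ c : Config N → ℂ, (∀ t, ‖c t‖ ≤ 1) ∧
    ∀ (f : HS N) (t : Config N), P f t = c t * f (maskFlip N m t)

lemma isPP_congr (N : ℕ) {P : Module.End ℂ (HS N)} {m m' : ZMod N → Bool}
    (h : IsPP N P m) (hm : ∀ k, m k = m' k) : IsPP N P m' := by
  obtain ⟨c, hc, hP⟩ := h
  exact ⟨c, hc, fun f t => by rw [hP, maskFlip_congr N hm]⟩

lemma isPP_one (N : ℕ) : IsPP N 1 (fun _ => false) :=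
  ⟨fun _ => 1, fun _ => by simp, fun f t => by
    have h : maskFlip N (fun _ => false) t = t := by funext k; simp [maskFlip]
    rw [h]
    simp [Module.End.one_apply]⟩

lemma isPP_mul (N : ℕ) {P Q : Module.End ℂ (HS N)} {m m' : ZMod N → Bool}
    (hP : IsPP N P m) (hQ : IsPP N Q m') :
    IsPP N (P * Q) (fun k => xor (m k) (m' k)) := by
  obtain ⟨c, hc, hPf⟩ := hP
  obtain ⟨c', hc', hQf⟩ := hQ
  refine ⟨fun t => c t * c' (maskFlip N m t), fun t => ?_, fun f t => ?_⟩
  · rw [norm_mul]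
    exact mul_le_one₀ (hc t) (norm_nonneg _) (hc' _)
  · have h1 : (P * Q) f t = P (Q f) t := rfl
    rw [h1, hPf, hQf, mul_assoc, maskFlip_maskFlip]
    rw [maskFlip_congr N (m' := fun k => xor (m k) (m' k)) (fun k => Bool.xor_comm _ _)]

lemma flipAt_eq_maskFlip (N : ℕ) (j : ZMod N) (s : Config N) :
    flipAt N j s = maskFlip N (fun k => decide (k = j)) s := by
  funext k
  by_cases h : k = j
  · subst h; simp [flipAt, maskFlip]
  · simp [flipAt, maskFlip, h, Function.update_of_ne h]

lemma isPP_pauli (N : ℕ) (κ : PKind) (j : ZMod N) :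
    IsPP N (pauli N κ j)
      (fun k => decide (k = j) && decide (κ = PKind.y ∨ κ = PKind.z)) := by
  cases κ with
  | id =>
      refine isPP_congr N (isPP_one N) (fun k => by simp)
  | x =>
      refine ⟨fun t => sgn (t j), fun t => by by_cases h : t j <;> simp [sgn, h],
        fun f t => ?_⟩
      show sgn (t j) * f t = _
      have h : maskFlip N (fun k => decide (k = j) &&
          decide (PKind.x = PKind.y ∨ PKind.x = PKind.z)) t = t := by
        funext k; simp [maskFlip]
      rw [h]
  | y =>
      refine ⟨fun t => Complex.I * sgn (t j), fun t => ?_, fun f t => ?_⟩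
      · rw [norm_mul]; simp only [Complex.norm_I, one_mul]
        by_cases h : t j <;> simp [sgn, h]
      · show (Complex.I • (sigmaX N j * sigmaZ N j)) f t = _
        have h1 : (Complex.I • (sigmaX N j * sigmaZ N j)) f t
            = Complex.I * (sigmaX N j) ((sigmaZ N j) f) t := rfl
        have h2 : (sigmaX N j) ((sigmaZ N j) f) t = sgn (t j) * f (flipAt N j t) := rfl
        rw [h1, h2, flipAt_eq_maskFlip]
        have h : maskFlip N (fun k => decide (k = j)) t
            = maskFlip N (fun k => decide (k = j) &&
                decide (PKind.y = PKind.y ∨ PKind.y = PKind.z)) t := by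
          funext k; simp [maskFlip]
        rw [h]; ring
  | z =>
      refine ⟨fun _ => 1, fun t => by simp, fun f t => ?_⟩
      show f (flipAt N j t) = _
      rw [flipAt_eq_maskFlip, one_mul]
      congr 1
      exact maskFlip_congr N (fun k => by simp) t

lemma isPP_list_prod (N : ℕ) (l : List (PKind × ZMod N))
    (hnd : (l.map Prod.snd).Nodup) :
    IsPP N ((l.map fun p => pauli N p.1 p.2).prod)
      (fun k => decide (∃ p ∈ l, p.2 = k ∧ (p.1 = PKind.y ∨ p.1 = PKind.z))) := by
  induction l with
  | nil =>
      refine isPP_congr N (isPP_one N) (fun k => by simp)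
  | cons p l ih =>
      rw [List.map_cons, List.nodup_cons] at hnd
      have h := isPP_mul N (isPP_pauli N p.1 p.2) (ih hnd.2)
      rw [List.map_cons, List.prod_cons]
      refine isPP_congr N h (fun k => ?_)
      by_cases hk : k = p.2
      · subst hk
        have h2 : ¬ (∃ q ∈ l, q.2 = p.2 ∧ (q.1 = PKind.y ∨ q.1 = PKind.z)) := by
          rintro ⟨q, hq, hq2, -⟩
          exact hnd.1 (List.mem_map.mpr ⟨q, hq, hq2⟩)
        have h3 : (∃ q ∈ p :: l, q.2 = p.2 ∧ (q.1 = PKind.y ∨ q.1 = PKind.z))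
            ↔ (p.1 = PKind.y ∨ p.1 = PKind.z) := by
          constructor
          · rintro ⟨q, hq, h1, hyz⟩
            rcases List.mem_cons.mp hq with rfl | hq
            · exact hyz
            · exact absurd ⟨q, hq, h1, hyz⟩ h2
          · intro hyz; exact ⟨p, List.mem_cons_self, rfl, hyz⟩
        have h5 : decide (∃ q ∈ p :: l, q.2 = p.2 ∧ (q.1 = PKind.y ∨ q.1 = PKind.z))
            = decide (p.1 = PKind.y ∨ p.1 = PKind.z) := by
          rw [decide_eq_decide]; exact h3
        rw [h5, decide_eq_false h2]
        simp
      · have h4 : (∃ q ∈ l, q.2 = k ∧ (q.1 = PKind.y ∨ q.1 = PKind.z))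
            ↔ (∃ q ∈ p :: l, q.2 = k ∧ (q.1 = PKind.y ∨ q.1 = PKind.z)) := by
          constructor
          · rintro ⟨q, hq, h1, h2⟩; exact ⟨q, List.mem_cons_of_mem p hq, h1, h2⟩
          · rintro ⟨q, hq, h1, h2⟩
            rcases List.mem_cons.mp hq with rfl | hq
            · exact absurd h1.symm hk
            · exact ⟨q, hq, h1, h2⟩
        simp only [hk, decide_false, Bool.false_and, Bool.false_xor]
        rw [decide_eq_decide]
        exact h4

lemma kc_iff (N : ℕ) (j k : ZMod N) :
    kinkConfig N j k = true ↔ ((k - j).val = 0 ∨ (k - j).val % 2 = 1) := by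
  simp [kinkConfig]

lemma val_add_one (N : ℕ) [NeZero N] (hN : 2 ≤ N) (x : ZMod N) :
    (x + 1).val = (x.val + 1) % N := by
  rw [ZMod.val_add]
  congr 2
  rw [ZMod.val_one_eq_one_mod]
  exact Nat.mod_eq_of_lt (by omega)

lemma kc_self (N : ℕ) (j : ZMod N) : kinkConfig N j j = true := by
  simp [kinkConfig]

lemma kc_self_succ (N : ℕ) [NeZero N] (hN : 2 ≤ N) (j : ZMod N) :
    kinkConfig N j (j + 1) = true := by
  rw [kc_iff]
  have h : j + 1 - j = 1 := by ring
  rw [h, ZMod.val_one_eq_one_mod, Nat.mod_eq_of_lt (by omega)]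
  right; rfl

lemma kc_double_true (N : ℕ) [NeZero N] (hodd : Odd N) (hN : 3 ≤ N) (j k : ZMod N)
    (h1 : kinkConfig N j k = true) (h2 : kinkConfig N j (k + 1) = true) : k = j := by
  rw [kc_iff] at h1 h2
  obtain ⟨m, hm⟩ := hodd
  set d := (k - j).val with hd
  have hdN : d < N := ZMod.val_lt _
  have hsub : k + 1 - j = (k - j) + 1 := by ring
  rw [hsub, val_add_one N (by omega)] at h2
  rcases h1 with h1 | h1
  · have : k - j = 0 := by
      rw [← ZMod.val_eq_zero]; exact h1
    have := sub_eq_zero.mp this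
    exact this
  · exfalso
    have hlt : d + 1 < N := by omega
    rw [Nat.mod_eq_of_lt hlt] at h2
    omega

lemma kc_double_false (N : ℕ) [NeZero N] (hN : 3 ≤ N) (j k : ZMod N)
    (h1 : kinkConfig N j k = false) (h2 : kinkConfig N j (k + 1) = false) : False := by
  have h1' : ¬ ((k - j).val = 0 ∨ (k - j).val % 2 = 1) := by
    rw [← kc_iff]; simp [h1]
  have h2' : ¬ (((k + 1) - j).val = 0 ∨ ((k + 1) - j).val % 2 = 1) := by
    rw [← kc_iff]; simp [h2]
  set d := (k - j).val with hd
  have hdN : d < N := ZMod.val_lt _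
  have hsub : k + 1 - j = (k - j) + 1 := by ring
  rw [hsub, val_add_one N (by omega)] at h2'
  rcases Nat.lt_or_ge (d + 1) N with hlt | hge
  · rw [Nat.mod_eq_of_lt hlt] at h2'
    omega
  · have hdN1 : d + 1 = N := by omega
    rw [hdN1, Nat.mod_self] at h2'
    omega

lemma kc_inj (N : ℕ) [NeZero N] (hodd : Odd N) (hN : 3 ≤ N) {j j' : ZMod N}
    (h : kinkConfig N j = kinkConfig N j') : j = j' := by
  have h1 : kinkConfig N j' j = true := by rw [← h]; exact kc_self N j
  have h2 : kinkConfig N j' (j + 1) = true := by rw [← h]; exact kc_self_succ N (by omega) j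
  exact kc_double_true N hodd hN j' j h1 h2

/-- Sites `1,…,L` (as residues). -/
def inS (N L : ℕ) (k : ZMod N) : Prop := ∃ i : ℕ, i < L ∧ k = ((i + 1 : ℕ) : ZMod N)

/-- Sites `0,1,…,L` (as residues). -/
def Tset (N L : ℕ) : Finset (ZMod N) :=
  (Finset.range (L + 1)).image (fun i : ℕ => (i : ZMod N))

lemma Tset_card (N L : ℕ) : (Tset N L).card ≤ L + 1 :=
  (Finset.card_image_le).trans (le_of_eq (Finset.card_range _))

lemma not_Tset (N L : ℕ) {a : ZMod N} (ha : a ∉ Tset N L) :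
    ¬ inS N L a ∧ ¬ inS N L (a + 1) := by
  constructor
  · rintro ⟨i, hi, rfl⟩
    exact ha (Finset.mem_image.mpr ⟨i + 1, Finset.mem_range.mpr (by omega), rfl⟩)
  · rintro ⟨i, hi, hie⟩
    refine ha (Finset.mem_image.mpr ⟨i, Finset.mem_range.mpr (by omega), ?_⟩)
    have : ((i + 1 : ℕ) : ZMod N) = (i : ZMod N) + 1 := by push_cast; ring
    rw [this] at hie
    exact (add_left_injective 1 hie.symm)

lemma maskA (N L : ℕ) [NeZero N] (hodd : Odd N) (hN : 3 ≤ N) (m : ZMod N → Bool)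
    (hsupp : ∀ k, m k = true → inS N L k) (hne : ∃ k, m k = true)
    (a b : ZMod N) (hab : maskFlip N m (kinkConfig N a) = kinkConfig N b) :
    a ∈ Tset N L := by
  by_contra h
  obtain ⟨hS1, hS2⟩ := not_Tset N L h
  have hma : m a = false := by
    cases hma : m a
    · rfl
    · exact absurd (hsupp a hma) hS1
  have hma1 : m (a + 1) = false := by
    cases hma : m (a + 1)
    · rfl
    · exact absurd (hsupp _ hma) hS2
  have e1 : kinkConfig N b a = true := by
    rw [← hab]
    show xor (kinkConfig N a a) (m a) = true
    rw [kc_self, hma]; rfl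
  have e2 : kinkConfig N b (a + 1) = true := by
    rw [← hab]
    show xor (kinkConfig N a (a + 1)) (m (a + 1)) = true
    rw [kc_self_succ N (by omega), hma1]; rfl
  have hba : a = b := kc_double_true N hodd hN b a e1 e2
  subst hba
  obtain ⟨k₀, hk₀⟩ := hne
  have := congrFun hab k₀
  rw [show maskFlip N m (kinkConfig N a) k₀ = xor (kinkConfig N a k₀) (m k₀) from rfl,
    hk₀] at this
  cases hkc : kinkConfig N a k₀ <;> rw [hkc] at this <;> simp at this

lemma maskB (N L : ℕ) [NeZero N] (hN : 3 ≤ N) (m : ZMod N → Bool)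
    (hsupp : ∀ k, ¬ inS N L k → m k = true)
    (a b : ZMod N) (hab : maskFlip N m (kinkConfig N a) = kinkConfig N b) :
    a ∈ Tset N L := by
  by_contra h
  obtain ⟨hS1, hS2⟩ := not_Tset N L h
  have e1 : kinkConfig N b a = false := by
    rw [← hab]
    show xor (kinkConfig N a a) (m a) = false
    rw [kc_self, hsupp a hS1]; rfl
  have e2 : kinkConfig N b (a + 1) = false := by
    rw [← hab]
    show xor (kinkConfig N a (a + 1)) (m (a + 1)) = false
    rw [kc_self_succ N (by omega), hsupp _ hS2]; rfl
  exact kc_double_false N hN b a e1 e2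

lemma term_bound (N L : ℕ) [NeZero N] (hodd : Odd N) (hN : 3 ≤ N)
    (mL mR : ZMod N → Bool) (f₁ f₂ : HS N)
    (h₁ : ∀ s, ‖f₁ s‖ ≤
      if ∃ a, maskFlip N mL s = kinkConfig N a then (Real.sqrt N)⁻¹ else 0)
    (h₂ : ∀ s, ‖f₂ s‖ ≤
      if ∃ a, maskFlip N mR s = kinkConfig N a then (Real.sqrt N)⁻¹ else 0)
    (hT : ∀ a b : ZMod N,
      maskFlip N (fun k => xor (mR k) (mL k)) (kinkConfig N a) = kinkConfig N b →
      a ∈ Tset N L) :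
    ‖braket N f₁ f₂‖ ≤ (L + 1) / N := by
  classical
  set inv := (Real.sqrt N)⁻¹ with hinv
  have hinv0 : (0:ℝ) ≤ inv := inv_nonneg.mpr (Real.sqrt_nonneg _)
  set C : Config N → Prop := fun s =>
    (∃ a, maskFlip N mL s = kinkConfig N a) ∧ (∃ b, maskFlip N mR s = kinkConfig N b)
    with hC
  have key : ∀ s : Config N, ‖f₁ s‖ * ‖f₂ s‖ ≤
      (if C s then inv * inv else 0) := by
    intro s
    have h := mul_le_mul (h₁ s) (h₂ s) (norm_nonneg _)
      (by split <;> simp [hinv0])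
    refine h.trans_eq ?_
    by_cases hP : (∃ a, maskFlip N mL s = kinkConfig N a) <;>
      by_cases hQ : (∃ b, maskFlip N mR s = kinkConfig N b) <;>
      simp [hC, hP, hQ]
  have step1 : ‖braket N f₁ f₂‖ ≤
      ∑ s : Config N, ‖f₁ s‖ * ‖f₂ s‖ := by
    refine (norm_sum_le _ _).trans ?_
    refine Finset.sum_le_sum (fun s _ => ?_)
    rw [norm_mul, Complex.norm_conj]
  have step2 : ∑ s : Config N, ‖f₁ s‖ * ‖f₂ s‖ ≤
      ∑ s : Config N, (if C s then inv * inv else 0) :=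
    Finset.sum_le_sum (fun s _ => key s)
  have step3 : ∑ s : Config N, (if C s then inv * inv else 0)
      = ((Finset.univ.filter C).card : ℝ) * (inv * inv) := by
    rw [← Finset.sum_filter, Finset.sum_const, nsmul_eq_mul]
  have hsub : Finset.univ.filter C ⊆
      (Tset N L).image (fun a => maskFlip N mL (kinkConfig N a)) := by
    intro s hs
    rw [Finset.mem_filter] at hs
    obtain ⟨-, ⟨a, ha⟩, ⟨b, hb⟩⟩ := hs
    have hs' : s = maskFlip N mL (kinkConfig N a) := by rw [← ha, maskFlip_invol]
    have h2 : maskFlip N (fun k => xor (mR k) (mL k)) (kinkConfig N a) = kinkConfig N b := by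
      rw [← maskFlip_maskFlip, ← hs', hb]
    exact Finset.mem_image.mpr ⟨a, hT a b h2, hs'.symm⟩
  have hcard : ((Finset.univ.filter C).card : ℝ) ≤ (L + 1 : ℝ) := by
    have := (Finset.card_le_card hsub).trans
      ((Finset.card_image_le).trans (Tset_card N L))
    exact_mod_cast this
  have hNpos : (0:ℝ) < N := by
    have : 0 < N := by omega
    exact_mod_cast this
  have hii : inv * inv = ((N:ℝ))⁻¹ := by
    rw [hinv, ← mul_inv, Real.mul_self_sqrt (le_of_lt hNpos)]
  calc ‖braket N f₁ f₂‖
      ≤ ∑ s : Config N, (if C s then inv * inv else 0) := step1.trans step2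
    _ = ((Finset.univ.filter C).card : ℝ) * (inv * inv) := step3
    _ ≤ (L + 1 : ℝ) * (inv * inv) := by
        apply mul_le_mul_of_nonneg_right hcard
        exact mul_nonneg hinv0 hinv0
    _ = (L + 1) / N := by rw [hii, div_eq_mul_inv]

lemma maskFlip_false (N : ℕ) (s : Config N) : maskFlip N (fun _ => false) s = s := by
  funext k; simp [maskFlip]

lemma cast_succ_inj (N : ℕ) [NeZero N] {j j' : ℕ} (hj : j < N) (hj' : j' < N)
    (h : ((j + 1 : ℕ) : ZMod N) = ((j' + 1 : ℕ) : ZMod N)) : j = j' := by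
  have h2 : ((j : ℕ) : ZMod N) = ((j' : ℕ) : ZMod N) := by
    push_cast at h
    exact add_left_injective 1 h
  have := congrArg ZMod.val h2
  rwa [ZMod.val_cast_of_lt hj, ZMod.val_cast_of_lt hj'] at this

lemma momState_bound (N : ℕ) [NeZero N] (hodd : Odd N) (hN : 3 ≤ N) (p : ℝ) :
    ∀ s, ‖momState N p s‖ ≤
      if ∃ a, maskFlip N (fun _ => false) s = kinkConfig N a then (Real.sqrt N)⁻¹ else 0 := by
  classical
  intro s
  have hrw : ∀ s, maskFlip N (fun _ => false) s = s := maskFlip_false N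
  have hval : momState N p s = (Real.sqrt N : ℂ)⁻¹ *
      ∑ j ∈ Finset.range N, Complex.exp (Complex.I * p * ((j : ℂ) + 1)) *
        (if s = kinkConfig N ((j + 1 : ℕ) : ZMod N) then 1 else 0) := by
    show ((Real.sqrt N : ℂ)⁻¹ • ∑ j ∈ Finset.range N,
      Complex.exp (Complex.I * p * ((j : ℂ) + 1)) • kink N ((j + 1 : ℕ) : ZMod N)) s = _
    simp only [Pi.smul_apply, Finset.sum_apply, smul_eq_mul]
    rfl
  rw [hval, norm_mul]
  have habs1 : ‖(Real.sqrt N : ℂ)⁻¹‖ = (Real.sqrt N)⁻¹ := by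
    rw [norm_inv, Complex.norm_real, Real.norm_eq_abs, _root_.abs_of_nonneg (Real.sqrt_nonneg _)]
  rw [habs1]
  have hterm : ∀ j ∈ Finset.range N,
      ‖Complex.exp (Complex.I * p * ((j : ℂ) + 1)) *
        (if s = kinkConfig N ((j + 1 : ℕ) : ZMod N) then 1 else 0)‖
      = (if s = kinkConfig N ((j + 1 : ℕ) : ZMod N) then (1:ℝ) else 0) := by
    intro j _
    rw [norm_mul]
    have hexp : ‖Complex.exp (Complex.I * p * ((j : ℂ) + 1))‖ = 1 := by
      rw [Complex.norm_exp]
      have : (Complex.I * p * ((j : ℂ) + 1)).re = 0 := by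
        simp [Complex.mul_re, Complex.mul_im]
      rw [this, Real.exp_zero]
    rw [hexp, one_mul]
    split <;> simp
  have hsum : ‖∑ j ∈ Finset.range N,
      Complex.exp (Complex.I * p * ((j : ℂ) + 1)) *
        (if s = kinkConfig N ((j + 1 : ℕ) : ZMod N) then 1 else 0)‖
      ≤ ∑ j ∈ Finset.range N, (if s = kinkConfig N ((j + 1 : ℕ) : ZMod N) then (1:ℝ) else 0) := by
    refine (norm_sum_le _ _).trans ?_
    refine Finset.sum_le_sum (fun j hj => le_of_eq (hterm j hj))
  have hsum2 : ∑ j ∈ Finset.range N, (if s = kinkConfig N ((j + 1 : ℕ) : ZMod N) then (1:ℝ) else 0)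
      ≤ (if ∃ a, maskFlip N (fun _ => false) s = kinkConfig N a then 1 else 0) := by
    by_cases hex : ∃ a, maskFlip N (fun _ => false) s = kinkConfig N a
    · rw [if_pos hex, ← Finset.sum_filter, Finset.sum_const, nsmul_eq_mul, mul_one]
      have : ((Finset.range N).filter
          (fun j => s = kinkConfig N ((j + 1 : ℕ) : ZMod N))).card ≤ 1 := by
        rw [Finset.card_le_one]
        intro j hj j' hj'
        rw [Finset.mem_filter, Finset.mem_range] at hj hj'
        have heq : kinkConfig N ((j + 1 : ℕ) : ZMod N)
            = kinkConfig N ((j' + 1 : ℕ) : ZMod N) := by rw [← hj.2, hj'.2]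
        exact cast_succ_inj N hj.1 hj'.1 (kc_inj N hodd hN heq)
      exact_mod_cast this
    · rw [if_neg hex]
      refine le_of_eq (Finset.sum_eq_zero (fun j _ => ?_))
      rw [if_neg]
      intro hcon
      exact hex ⟨((j + 1 : ℕ) : ZMod N), by rw [hrw]; exact hcon⟩
  calc (Real.sqrt N)⁻¹ * ‖∑ j ∈ Finset.range N, _‖
      ≤ (Real.sqrt N)⁻¹ * (if ∃ a, maskFlip N (fun _ => false) s = kinkConfig N a then 1 else 0) := by
        refine mul_le_mul_of_nonneg_left (hsum.trans hsum2) ?_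
        exact inv_nonneg.mpr (Real.sqrt_nonneg _)
    _ = _ := by split <;> simp

lemma pp_pointwise (N : ℕ) [NeZero N] {P : Module.End ℂ (HS N)} {m : ZMod N → Bool}
    (hP : IsPP N P m) (f : HS N) (m₀ : ZMod N → Bool)
    (h : ∀ s, ‖f s‖ ≤
      if ∃ a, maskFlip N m₀ s = kinkConfig N a then (Real.sqrt N)⁻¹ else 0) :
    ∀ s, ‖P f s‖ ≤
      if ∃ a, maskFlip N (fun k => xor (m₀ k) (m k)) s = kinkConfig N a
        then (Real.sqrt N)⁻¹ else 0 := by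
  classical
  intro s
  obtain ⟨c, hc, hPf⟩ := hP
  rw [hPf, norm_mul]
  have hb := h (maskFlip N m s)
  rw [maskFlip_maskFlip] at hb
  have hnn : (0:ℝ) ≤ if ∃ a, maskFlip N (fun k => xor (m₀ k) (m k)) s = kinkConfig N a
      then (Real.sqrt N)⁻¹ else 0 := by
    split <;> simp [inv_nonneg.mpr (Real.sqrt_nonneg _)]
  calc ‖c s‖ * ‖f (maskFlip N m s)‖
      ≤ 1 * (if ∃ a, maskFlip N (fun k => xor (m₀ k) (m k)) s = kinkConfig N a
          then (Real.sqrt N)⁻¹ else 0) :=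
        mul_le_mul (hc s) hb (norm_nonneg _) zero_le_one
    _ = _ := one_mul _

lemma braket_left (N : ℕ) [NeZero N] (a b : ℂ) (f g h : HS N) :
    braket N (a • f + b • g) h
      = (starRingEnd ℂ) a * braket N f h + (starRingEnd ℂ) b * braket N g h := by
  unfold braket
  calc ∑ s, (starRingEnd ℂ) ((a • f + b • g) s) * h s
      = ∑ s, ((starRingEnd ℂ) a * ((starRingEnd ℂ) (f s) * h s)
          + (starRingEnd ℂ) b * ((starRingEnd ℂ) (g s) * h s)) := by
        refine Finset.sum_congr rfl (fun s _ => ?_)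
        simp only [Pi.add_apply, Pi.smul_apply, smul_eq_mul, map_add, map_mul]
        ring
    _ = _ := by
        rw [Finset.sum_add_distrib, ← Finset.mul_sum, ← Finset.mul_sum]

lemma braket_right (N : ℕ) [NeZero N] (a b : ℂ) (f g h : HS N) :
    braket N f (a • g + b • h) = a * braket N f g + b * braket N f h := by
  unfold braket
  calc ∑ s, (starRingEnd ℂ) (f s) * ((a • g + b • h) s)
      = ∑ s, (a * ((starRingEnd ℂ) (f s) * g s) + b * ((starRingEnd ℂ) (f s) * h s)) := by
        refine Finset.sum_congr rfl (fun s _ => ?_)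
        simp only [Pi.add_apply, Pi.smul_apply, smul_eq_mul]
        ring
    _ = _ := by
        rw [Finset.sum_add_distrib, ← Finset.mul_sum, ← Finset.mul_sum]
/-- For `A = σ^{α₁}_1 ⋯ σ^{α_L}_L` with at least one `α_k ∈ {y,z}`
and `1 ≤ L ≤ N−2`, one has `|⟨g₁|A|g₂⟩| ≤ (L+1)²/N`. -/
theorem statement_1 (N : ℕ) [NeZero N] (hN : Odd N)
    (L : ℕ) (hL1 : 1 ≤ L) (hLN : L + 2 ≤ N)
    (α : Fin L → PKind) (hα : ∃ k, α k = PKind.y ∨ α k = PKind.z)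
    (A : Module.End ℂ (HS N))
    (hA : A = ((List.finRange L).map
      (fun k => pauli N (α k) (((k : ℕ) + 1 : ℕ) : ZMod N))).prod)
    (k₁ k₂ : ℕ) (hk₁ : k₁ < N) (hk₂ : k₂ < N)
    (p₁ p₂ : ℝ) (hp₁ : p₁ = 2 * Real.pi * k₁ / N) (hp₂ : p₂ = 2 * Real.pi * k₂ / N)
    (u₁ v₁ u₂ v₂ : ℂ)
    (hu₁ : ‖u₁‖ ^ 2 + ‖v₁‖ ^ 2 = 1)
    (hu₂ : ‖u₂‖ ^ 2 + ‖v₂‖ ^ 2 = 1)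
    (g₁ g₂ : HS N)
    (hg₁ : g₁ = u₁ • momState N p₁ + v₁ • parity N PKind.z (momState N p₁))
    (hg₂ : g₂ = u₂ • momState N p₂ + v₂ • parity N PKind.z (momState N p₂)) :
    ‖braket N g₁ (A g₂)‖ ≤ ((L : ℝ) + 1) ^ 2 / N := by
  classical
  have hN3 : 3 ≤ N := by omega
  have hodd := hN
  -- the mask of A
  set lA : List (PKind × ZMod N) :=
    (List.finRange L).map (fun k => (α k, (((k : ℕ) + 1 : ℕ) : ZMod N))) with hlA
  set mA : ZMod N → Bool :=
    (fun k => decide (∃ p ∈ lA, p.2 = k ∧ (p.1 = PKind.y ∨ p.1 = PKind.z))) with hmA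
  have hmap : lA.map (fun p => pauli N p.1 p.2)
      = (List.finRange L).map (fun k => pauli N (α k) (((k : ℕ) + 1 : ℕ) : ZMod N)) := by
    rw [hlA, List.map_map]
    rfl
  have hnodup : (lA.map Prod.snd).Nodup := by
    rw [hlA, List.map_map]
    refine List.Nodup.map_on ?_ (List.nodup_finRange L)
    intro x _ y _ hxy
    have hx : (x : ℕ) + 1 < N := by omega
    have hy : (y : ℕ) + 1 < N := by omega
    exact Fin.ext (cast_succ_inj N (by omega) (by omega) hxy)
  have hA' : IsPP N A mA := by
    rw [hA, ← hmap]
    exact isPP_list_prod N lA hnodup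
  have hAsupp : ∀ k, mA k = true → inS N L k := by
    intro k hk
    obtain ⟨p, hp, hp2, -⟩ := of_decide_eq_true hk
    obtain ⟨i, -, rfl⟩ := List.mem_map.mp hp
    exact ⟨(i : ℕ), i.2, hp2.symm⟩
  have hAne : ∃ k, mA k = true := by
    obtain ⟨k₀, hk₀⟩ := hα
    refine ⟨(((k₀ : ℕ) + 1 : ℕ) : ZMod N), decide_eq_true ?_⟩
    exact ⟨(α k₀, (((k₀ : ℕ) + 1 : ℕ) : ZMod N)),
      List.mem_map.mpr ⟨k₀, List.mem_finRange k₀, rfl⟩, rfl, hk₀⟩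
  -- the parity operator is a Pauli product with full mask
  have hZ : IsPP N (parity N PKind.z) (fun _ => true) := by
    set lz : List (PKind × ZMod N) :=
      (List.range N).map (fun j => (PKind.z, ((j + 1 : ℕ) : ZMod N))) with hlz
    have hmapz : lz.map (fun p => pauli N p.1 p.2)
        = (List.range N).map (fun j => pauli N PKind.z ((j + 1 : ℕ) : ZMod N)) := by
      rw [hlz, List.map_map]
      rfl
    have hnodupz : (lz.map Prod.snd).Nodup := by
      rw [hlz, List.map_map]
      refine List.Nodup.map_on ?_ (List.nodup_range)
      intro x hx y hy hxy
      exact cast_succ_inj N (List.mem_range.mp hx) (List.mem_range.mp hy) hxy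
    have h1 := isPP_list_prod N lz hnodupz
    have h2 : parity N PKind.z = (lz.map (fun p => pauli N p.1 p.2)).prod := by
      rw [hmapz]; rfl
    rw [← h2] at h1
    refine isPP_congr N h1 (fun k => ?_)
    refine decide_eq_true ?_
    refine ⟨(PKind.z, (((k - 1).val + 1 : ℕ) : ZMod N)),
      List.mem_map.mpr ⟨(k - 1).val, List.mem_range.mpr (ZMod.val_lt _), rfl⟩, ?_, Or.inr rfl⟩
    show (((k - 1).val + 1 : ℕ) : ZMod N) = k
    push_cast
    rw [ZMod.natCast_rightInverse (k - 1)]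
    ring
  set inv : ℝ := (Real.sqrt N)⁻¹ with hinvdef
  -- pointwise bounds for the four vectors
  have b1 := momState_bound N hodd hN3 p₁
  have b2 := momState_bound N hodd hN3 p₂
  have bZ1 := pp_pointwise N hZ (momState N p₁) (fun _ => false) b1
  have bA2 := pp_pointwise N hA' (momState N p₂) (fun _ => false) b2
  have bZ2 := pp_pointwise N hZ (momState N p₂) (fun _ => false) b2
  have bAZ2 := pp_pointwise N hA' (parity N PKind.z (momState N p₂))
    (fun k => xor ((fun _ : ZMod N => false) k) ((fun _ : ZMod N => true) k)) bZ2
  -- the four term bounds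
  have t11 : ‖braket N (momState N p₁) (A (momState N p₂))‖
      ≤ (L + 1) / N := by
    refine term_bound N L hodd hN3 _ _ _ _ b1 bA2 (fun a b hab => ?_)
    refine maskA N L hodd hN3 _ (fun k hk => hAsupp k (by simpa using hk)) ?_ a b hab
    obtain ⟨k, hk⟩ := hAne
    exact ⟨k, by simpa using hk⟩
  have t12 : ‖braket N (momState N p₁) (A (parity N PKind.z (momState N p₂)))‖
      ≤ (L + 1) / N := by
    refine term_bound N L hodd hN3 _ _ _ _ b1 bAZ2 (fun a b hab => ?_)
    refine maskB N L hN3 _ (fun k hk => ?_) a b hab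
    have : mA k = false := by
      cases h : mA k
      · rfl
      · exact absurd (hAsupp k h) hk
    simp [this]
  have t21 : ‖braket N (parity N PKind.z (momState N p₁)) (A (momState N p₂))‖
      ≤ (L + 1) / N := by
    refine term_bound N L hodd hN3 _ _ _ _ bZ1 bA2 (fun a b hab => ?_)
    refine maskB N L hN3 _ (fun k hk => ?_) a b hab
    have : mA k = false := by
      cases h : mA k
      · rfl
      · exact absurd (hAsupp k h) hk
    simp [this]
  have t22 : ‖braket N (parity N PKind.z (momState N p₁))
      (A (parity N PKind.z (momState N p₂)))‖ ≤ (L + 1) / N := by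
    refine term_bound N L hodd hN3 _ _ _ _ bZ1 bAZ2 (fun a b hab => ?_)
    refine maskA N L hodd hN3 _ (fun k hk => hAsupp k (by simpa using hk)) ?_ a b hab
    obtain ⟨k, hk⟩ := hAne
    refine ⟨k, ?_⟩
    simpa using hk
  -- expand the bracket
  have hexp : braket N g₁ (A g₂)
      = (starRingEnd ℂ) u₁ * (u₂ * braket N (momState N p₁) (A (momState N p₂))
          + v₂ * braket N (momState N p₁) (A (parity N PKind.z (momState N p₂))))
        + (starRingEnd ℂ) v₁ * (u₂ * braket N (parity N PKind.z (momState N p₁)) (A (momState N p₂))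
          + v₂ * braket N (parity N PKind.z (momState N p₁)) (A (parity N PKind.z (momState N p₂)))) := by
    rw [hg₁, hg₂, map_add, map_smul, map_smul, braket_left, braket_right, braket_right]
  rw [hexp]
  have hnn : (0:ℝ) ≤ (L + 1) / N := by positivity
  set D : ℝ := ((L : ℝ) + 1) / N with hD
  have habs : ‖(starRingEnd ℂ) u₁ * (u₂ * braket N (momState N p₁) (A (momState N p₂))
          + v₂ * braket N (momState N p₁) (A (parity N PKind.z (momState N p₂))))
        + (starRingEnd ℂ) v₁ * (u₂ * braket N (parity N PKind.z (momState N p₁)) (A (momState N p₂))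
          + v₂ * braket N (parity N PKind.z (momState N p₁)) (A (parity N PKind.z (momState N p₂))))‖
      ≤ (‖u₁‖ + ‖v₁‖) * ((‖u₂‖ + ‖v₂‖) * D) := by
    refine (norm_add_le _ _).trans ?_
    rw [norm_mul, norm_mul, Complex.norm_conj, Complex.norm_conj]
    have inner1 : ‖u₂ * braket N (momState N p₁) (A (momState N p₂))
        + v₂ * braket N (momState N p₁) (A (parity N PKind.z (momState N p₂)))‖
        ≤ (‖u₂‖ + ‖v₂‖) * D := by
      refine (norm_add_le _ _).trans ?_
      rw [norm_mul, norm_mul, add_mul]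
      exact add_le_add
        (mul_le_mul_of_nonneg_left t11 (norm_nonneg u₂))
        (mul_le_mul_of_nonneg_left t12 (norm_nonneg v₂))
    have inner2 : ‖u₂ * braket N (parity N PKind.z (momState N p₁)) (A (momState N p₂))
        + v₂ * braket N (parity N PKind.z (momState N p₁)) (A (parity N PKind.z (momState N p₂)))‖
        ≤ (‖u₂‖ + ‖v₂‖) * D := by
      refine (norm_add_le _ _).trans ?_
      rw [norm_mul, norm_mul, add_mul]
      exact add_le_add
        (mul_le_mul_of_nonneg_left t21 (norm_nonneg u₂))
        (mul_le_mul_of_nonneg_left t22 (norm_nonneg v₂))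
    rw [add_mul]
    exact add_le_add
      (mul_le_mul_of_nonneg_left inner1 (norm_nonneg u₁))
      (mul_le_mul_of_nonneg_left inner2 (norm_nonneg v₁))
  refine habs.trans ?_
  have h2 : (‖u₁‖ + ‖v₁‖) * (‖u₂‖ + ‖v₂‖) ≤ 2 := by
    nlinarith [norm_nonneg u₁, norm_nonneg v₁, norm_nonneg u₂,
      norm_nonneg v₂, sq_nonneg (‖u₁‖ - ‖v₁‖),
      sq_nonneg (‖u₂‖ - ‖v₂‖),
      sq_nonneg (‖u₁‖ + ‖v₁‖ - (‖u₂‖ + ‖v₂‖))]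
  have hDnn : 0 ≤ D := hnn
  calc (‖u₁‖ + ‖v₁‖) * ((‖u₂‖ + ‖v₂‖) * D)
      = ((‖u₁‖ + ‖v₁‖) * (‖u₂‖ + ‖v₂‖)) * D := by ring
    _ ≤ 2 * D := mul_le_mul_of_nonneg_right h2 hDnn
    _ ≤ ((L : ℝ) + 1) ^ 2 / N := by
        have hL : (1:ℝ) ≤ (L : ℝ) := by exact_mod_cast hL1
        have hNpos : (0:ℝ) < N := by
          have : 0 < N := by omega
          exact_mod_cast this
        rw [hD, show (2:ℝ) * (((L:ℝ) + 1) / N) = (2 * ((L:ℝ) + 1)) / N from by ring,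
          div_le_div_iff_of_pos_right hNpos]
        nlinarith



end SpinChain
end

section
/- Let A be a linear operator on H_N that commutes with Π^x and satisfies Π^z A Π^z = εA for some ε ∈ {+1,−1} (as holds for any product of Pauli operators commuting with Π^x). Then |⟨g_1| A |g_2⟩| ≤ |⟨s_{p_1}| A |s_{p_2}⟩|. -/
open Complex BigOperators Finset

namespace SpinChain

-- ===================== auxiliary development =====================

/-- the site list used in `parity` -/
def siteList (N : ℕ) : List (ZMod N) := (List.range N).map (fun j => ((j + 1 : ℕ) : ZMod N))

lemma siteList_nodup (N : ℕ) [NeZero N] : (siteList N).Nodup := by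
  refine List.Nodup.map_on ?_ List.nodup_range
  intro a ha b hb hab
  rw [List.mem_range] at ha hb
  have : ((a+1 : ℕ) : ZMod N) - 1 = ((b+1 : ℕ) : ZMod N) - 1 := by rw [hab]
  have h2 : ((a : ℕ) : ZMod N) = ((b : ℕ) : ZMod N) := by push_cast at this ⊢; linear_combination this
  have := congrArg ZMod.val h2
  rwa [ZMod.val_natCast_of_lt ha, ZMod.val_natCast_of_lt hb] at this

lemma siteList_mem (N : ℕ) [NeZero N] (k : ZMod N) : k ∈ siteList N := by
  refine List.mem_map.mpr ⟨(k - 1).val, List.mem_range.mpr (ZMod.val_lt _), ?_⟩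
  push_cast
  rw [ZMod.natCast_val, ZMod.cast_id]
  ring

lemma siteList_count (N : ℕ) [NeZero N] (k : ZMod N) : (siteList N).count k = 1 :=
  List.count_eq_one_of_mem (siteList_nodup N) (siteList_mem N k)

lemma siteList_toFinset (N : ℕ) [NeZero N] : (siteList N).toFinset = Finset.univ :=
  Finset.eq_univ_iff_forall.mpr fun k => List.mem_toFinset.mpr (siteList_mem N k)

/-- explicit Π^x -/
noncomputable def PX (N : ℕ) [NeZero N] : Module.End ℂ (HS N) where
  toFun f := fun s => (∏ k : ZMod N, sgn (s k)) * f s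
  map_add' f g := by funext s; simp [mul_add]
  map_smul' c f := by funext s; simp [smul_eq_mul]; ring

/-- explicit Π^z -/
def PZ (N : ℕ) : Module.End ℂ (HS N) where
  toFun f := fun s => f (fun k => !(s k))
  map_add' _ _ := rfl
  map_smul' _ _ := rfl

lemma prodX_apply (N : ℕ) (l : List (ZMod N)) (f : HS N) (s : Config N) :
    (l.map (sigmaX N)).prod f s = (l.map (fun j => sgn (s j))).prod * f s := by
  induction l with
  | nil => simp [Module.End.one_apply]
  | cons a t ih =>
      simp only [List.map_cons, List.prod_cons, Module.End.mul_apply]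
      show sgn (s a) * ((t.map (sigmaX N)).prod f s) = _
      rw [ih]; ring

lemma prodZ_apply (N : ℕ) (l : List (ZMod N)) (f : HS N) (s : Config N) :
    (l.map (sigmaZ N)).prod f s = f (l.foldl (fun t j => flipAt N j t) s) := by
  induction l generalizing s with
  | nil => simp [Module.End.one_apply]
  | cons a t ih =>
      simp only [List.map_cons, List.prod_cons, Module.End.mul_apply, List.foldl_cons]
      show ((t.map (sigmaZ N)).prod f) (flipAt N a s) = _
      rw [ih]

lemma foldl_flip (N : ℕ) (l : List (ZMod N)) (s : Config N) (k : ZMod N) :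
    (l.foldl (fun t j => flipAt N j t) s) k =
      if Odd (l.count k) then !(s k) else s k := by
  induction l generalizing s with
  | nil => simp
  | cons a t ih =>
      simp only [List.foldl_cons, ih, List.count_cons]
      by_cases hak : k = a
      · subst hak
        have hf : flipAt N k s k = !(s k) := Function.update_self _ _ _
        simp only [if_pos rfl, hf, Nat.odd_add_one]
        by_cases h : Odd (t.count k) <;> simp [Nat.odd_add_one, h]
      · have hf : flipAt N a s k = s k := Function.update_of_ne hak _ s
        simp [hf, (Ne.symm hak : a ≠ k)]

lemma parity_x (N : ℕ) [NeZero N] : parity N PKind.x = PX N := by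
  apply LinearMap.ext; intro f; funext s
  have : parity N PKind.x = ((siteList N).map (sigmaX N)).prod := by
    rw [siteList, List.map_map]; rfl
  rw [this, prodX_apply]
  show _ * f s = _ * f s
  congr 1
  rw [← List.prod_toFinset _ (siteList_nodup N), siteList_toFinset]

lemma parity_z (N : ℕ) [NeZero N] : parity N PKind.z = PZ N := by
  apply LinearMap.ext; intro f; funext s
  have : parity N PKind.z = ((siteList N).map (sigmaZ N)).prod := by
    rw [siteList, List.map_map]; rfl
  rw [this, prodZ_apply]
  show f _ = f _
  congr 1
  funext k
  rw [foldl_flip, siteList_count, if_pos (by norm_num)]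


-- braket sesquilinearity
lemma braket_add_left (N : ℕ) [NeZero N] (f g h : HS N) :
    braket N (f + g) h = braket N f h + braket N g h := by
  simp [braket, add_mul, Finset.sum_add_distrib]

lemma braket_add_right (N : ℕ) [NeZero N] (f g h : HS N) :
    braket N f (g + h) = braket N f g + braket N f h := by
  simp [braket, mul_add, Finset.sum_add_distrib]

lemma braket_smul_left (N : ℕ) [NeZero N] (a : ℂ) (f g : HS N) :
    braket N (a • f) g = (starRingEnd ℂ) a * braket N f g := by
  simp [braket, Finset.mul_sum, mul_assoc]

lemma braket_smul_right (N : ℕ) [NeZero N] (a : ℂ) (f g : HS N) :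
    braket N f (a • g) = a * braket N f g := by
  simp [braket, Finset.mul_sum]; congr 1; funext s; ring

/-- flipping all spins is an involution -/
def flipAll (N : ℕ) : Config N ≃ Config N :=
  Function.Involutive.toPerm (fun s => fun k => !(s k)) (fun s => by funext k; simp)

lemma PZ_apply (N : ℕ) (f : HS N) (s : Config N) : PZ N f s = f (fun k => !(s k)) := rfl

lemma PZ_selfadj (N : ℕ) [NeZero N] (f g : HS N) :
    braket N (PZ N f) g = braket N f (PZ N g) := by
  unfold braket
  rw [← Equiv.sum_comp (flipAll N) (fun s => (starRingEnd ℂ) (f s) * PZ N g s)]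
  apply Finset.sum_congr rfl
  intro s _
  simp [flipAll, PZ_apply, Function.Involutive.coe_toPerm]
  simp only [Function.Involutive.toPerm, Equiv.coe_fn_mk, Bool.not_not]

lemma PZ_PZ (N : ℕ) (f : HS N) : PZ N (PZ N f) = f := by
  funext s; simp [PZ_apply]

lemma conj_sgn (b : Bool) : (starRingEnd ℂ) (sgn b) = sgn b := by cases b <;> simp [sgn]

lemma PX_apply (N : ℕ) [NeZero N] (f : HS N) (s : Config N) :
    PX N f s = (∏ k : ZMod N, sgn (s k)) * f s := rfl

lemma PX_selfadj (N : ℕ) [NeZero N] (f g : HS N) :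
    braket N (PX N f) g = braket N f (PX N g) := by
  unfold braket
  apply Finset.sum_congr rfl
  intro s _
  simp only [PX_apply, map_mul, map_prod, conj_sgn]
  ring

lemma sgn_not (b : Bool) : sgn (!b) = - sgn b := by cases b <;> simp [sgn]

lemma PX_PZ (N : ℕ) [NeZero N] (hN : Odd N) (f : HS N) :
    PX N (PZ N f) = - PZ N (PX N f) := by
  funext s
  show (∏ k : ZMod N, sgn (s k)) * f (fun k => !(s k))
      = - ((∏ k : ZMod N, sgn ((fun k => !(s k)) k)) * f (fun k => !(s k)))
  have : ∏ k : ZMod N, sgn (!(s k)) = - ∏ k : ZMod N, sgn (s k) := by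
    simp only [sgn_not]
    rw [Finset.prod_congr rfl (fun k _ => (neg_one_mul (sgn (s k))).symm),
      Finset.prod_mul_distrib, Finset.prod_const, Finset.card_univ, ZMod.card,
      Odd.neg_one_pow hN, neg_one_mul]
  rw [this]; ring

/-- the Π^x eigenvalue on the kink sector -/
noncomputable def kc (N : ℕ) [NeZero N] : ℂ := ∏ m : ZMod N, sgn (kinkConfig N 0 m)

lemma kinkConfig_shift (N : ℕ) (j k : ZMod N) :
    kinkConfig N j k = kinkConfig N 0 (k - j) := by simp [kinkConfig]

lemma prod_sgn_kink (N : ℕ) [NeZero N] (j : ZMod N) :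
    ∏ k : ZMod N, sgn (kinkConfig N j k) = kc N := by
  unfold kc
  rw [← Equiv.prod_comp (Equiv.subRight j) (fun m => sgn (kinkConfig N 0 m))]
  apply Finset.prod_congr rfl; intro k _
  rw [Equiv.subRight_apply, kinkConfig_shift]

lemma kc_mul_kc (N : ℕ) [NeZero N] : kc N * kc N = 1 := by
  unfold kc
  rw [← Finset.prod_mul_distrib]
  have h : ∀ m ∈ Finset.univ, sgn (kinkConfig N 0 m) * sgn (kinkConfig N 0 m) = (1:ℂ) :=
    fun m _ => by cases kinkConfig N 0 m <;> simp [sgn]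
  rw [Finset.prod_congr rfl h, Finset.prod_const_one]

lemma kc_ne_zero (N : ℕ) [NeZero N] : kc N ≠ 0 := by
  intro h
  have := kc_mul_kc N
  rw [h, mul_zero] at this
  exact zero_ne_one this

lemma conj_kc (N : ℕ) [NeZero N] : (starRingEnd ℂ) (kc N) = kc N := by
  unfold kc; rw [map_prod]; exact Finset.prod_congr rfl fun m _ => conj_sgn _

lemma PX_basis (N : ℕ) [NeZero N] (t : Config N) :
    PX N (basis N t) = (∏ k : ZMod N, sgn (t k)) • basis N t := by
  funext s
  show (∏ k : ZMod N, sgn (s k)) * (if s = t then 1 else 0)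
      = (∏ k : ZMod N, sgn (t k)) * (if s = t then 1 else 0)
  by_cases h : s = t
  · subst h; rfl
  · simp [h]

lemma PX_kink (N : ℕ) [NeZero N] (j : ZMod N) :
    PX N (kink N j) = kc N • kink N j := by
  rw [kink, PX_basis, prod_sgn_kink]

lemma PX_mom (N : ℕ) [NeZero N] (p : ℝ) :
    PX N (momState N p) = kc N • momState N p := by
  unfold momState
  rw [map_smul, map_sum]
  rw [Finset.sum_congr rfl (fun j _ => by rw [map_smul, PX_kink, smul_comm])]
  rw [← Finset.smul_sum, smul_comm]

/-- If `A` commutes with `Π^x` and `Π^z A Π^z = εA` with `ε ∈ {±1}`,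
then `|⟨g₁|A|g₂⟩| ≤ |⟨s_{p₁}|A|s_{p₂}⟩|`. -/
theorem statement_2 (N : ℕ) [NeZero N] (hN : Odd N)
    (A : Module.End ℂ (HS N))
    (hcomm : A * parity N PKind.x = parity N PKind.x * A)
    (ε : ℂ) (hε : ε = 1 ∨ ε = -1)
    (hz : parity N PKind.z * A * parity N PKind.z = ε • A)
    (k₁ k₂ : ℕ) (hk₁ : k₁ < N) (hk₂ : k₂ < N)
    (p₁ p₂ : ℝ) (hp₁ : p₁ = 2 * Real.pi * k₁ / N) (hp₂ : p₂ = 2 * Real.pi * k₂ / N)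
    (u₁ v₁ u₂ v₂ : ℂ)
    (hu₁ : ‖u₁‖ ^ 2 + ‖v₁‖ ^ 2 = 1)
    (hu₂ : ‖u₂‖ ^ 2 + ‖v₂‖ ^ 2 = 1)
    (g₁ g₂ : HS N)
    (hg₁ : g₁ = u₁ • momState N p₁ + v₁ • parity N PKind.z (momState N p₁))
    (hg₂ : g₂ = u₂ • momState N p₂ + v₂ • parity N PKind.z (momState N p₂)) :
    ‖braket N g₁ (A g₂)‖ ≤
      ‖braket N (momState N p₁) (A (momState N p₂))‖ := by
  set S₁ := momState N p₁ with hS₁def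
  set S₂ := momState N p₂ with hS₂def
  set c := kc N with hcdef
  set M := braket N S₁ (A S₂) with hMdef
  have hpz := parity_z N
  have hpx := parity_x N
  rw [hpz] at hg₁ hg₂ hz
  rw [hpx] at hcomm
  have hPZ2 : PZ N * PZ N = 1 := LinearMap.ext fun f => PZ_PZ N f
  have hz' : A * PZ N = ε • (PZ N * A) := by
    calc A * PZ N = (PZ N * PZ N) * A * PZ N := by rw [hPZ2, one_mul]
    _ = PZ N * (PZ N * A * PZ N) := by rw [mul_assoc, mul_assoc, mul_assoc]
    _ = PZ N * (ε • A) := by rw [hz]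
    _ = ε • (PZ N * A) := by rw [mul_smul_comm]
  have hAPZ : ∀ w : HS N, A (PZ N w) = ε • PZ N (A w) := by
    intro w
    have := congrArg (fun T : Module.End ℂ (HS N) => T w) hz'
    simpa using this
  have hAPX : ∀ w : HS N, PX N (A w) = A (PX N w) := by
    intro w
    have := congrArg (fun T : Module.End ℂ (HS N) => T w) hcomm
    simpa using this.symm
  -- cross term vanishes
  have hB : braket N (PZ N S₁) (A S₂) = 0 := by
    set B := braket N (PZ N S₁) (A S₂) with hBdef
    have h1 : braket N (PX N (PZ N S₁)) (A S₂) = c * B := by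
      rw [PX_selfadj, hAPX, hS₂def, PX_mom, ← hS₂def, map_smul, braket_smul_right, hBdef, hcdef]
    have h2 : braket N (PX N (PZ N S₁)) (A S₂) = -(c * B) := by
      rw [PX_PZ N hN, hS₁def, PX_mom, ← hS₁def, ← hcdef, map_smul]
      have : -(c • PZ N S₁) = (-c) • PZ N S₁ := by rw [neg_smul]
      rw [this, braket_smul_left, map_neg, conj_kc, ← hcdef, hBdef, neg_mul]
    have heq : c * B = -(c * B) := h1.symm.trans h2
    have h20 : (2:ℂ) * (c * B) = 0 := by linear_combination heq
    have hc0 : c * B = 0 := (mul_eq_zero.mp h20).resolve_left two_ne_zero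
    rcases mul_eq_zero.mp hc0 with h | h
    · exact absurd (hcdef ▸ h) (kc_ne_zero N)
    · exact h
  -- the two other entries
  have hcross : braket N S₁ (A (PZ N S₂)) = 0 := by
    rw [hAPZ, braket_smul_right, ← PZ_selfadj, hB, mul_zero]
  have hdiag : braket N (PZ N S₁) (A (PZ N S₂)) = ε * M := by
    rw [hAPZ, braket_smul_right, PZ_selfadj, PZ_PZ, ← hMdef]
  -- expand
  have hexp : braket N g₁ (A g₂) = ((starRingEnd ℂ) u₁ * u₂ + (starRingEnd ℂ) v₁ * v₂ * ε) * M := by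
    rw [hg₁, hg₂, map_add, map_smul, map_smul, braket_add_left, braket_smul_left,
      braket_smul_left, braket_add_right, braket_add_right, braket_smul_right,
      braket_smul_right, braket_smul_right, braket_smul_right,
      hcross, hB, hdiag, ← hMdef]
    ring
  rw [hexp, norm_mul]
  have htri : ‖(starRingEnd ℂ) u₁ * u₂ + (starRingEnd ℂ) v₁ * v₂ * ε‖ ≤ 1 := by
    have habs : ‖ε‖ = 1 := by rcases hε with h | h <;> simp [h]
    calc ‖(starRingEnd ℂ) u₁ * u₂ + (starRingEnd ℂ) v₁ * v₂ * ε‖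
        ≤ ‖(starRingEnd ℂ) u₁ * u₂‖ + ‖(starRingEnd ℂ) v₁ * v₂ * ε‖ :=
          norm_add_le _ _
      _ = ‖u₁‖ * ‖u₂‖ + ‖v₁‖ * ‖v₂‖ := by
          simp [norm_mul, habs]
      _ ≤ 1 := by
          nlinarith [sq_nonneg (‖u₁‖ - ‖u₂‖),
            sq_nonneg (‖v₁‖ - ‖v₂‖)]
  calc ‖_‖ * ‖M‖ ≤ 1 * ‖M‖ :=
        mul_le_mul_of_nonneg_right htri (norm_nonneg _)
    _ = ‖M‖ := one_mul _


end SpinChain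
end

section
/- Fix momenta p_1 = 2πk_1/N, p_2 = 2πk_2/N with k_1, k_2 ∈ {0,…,N−1}, a phase θ ∈ ℝ, and let |g⟩ = (|s_{p_1}⟩ + e^{iθ}|s_{p_2}⟩)/√2. Then there exist a phase θ' ∈ ℝ (depending only on θ, p_1, p_2) and a constant C > 0 independent of N, j and θ such that for every site j ∈ {1,…,N}: |⟨g| σ^x_j |g⟩ − cos((p_1−p_2)j + θ')/(N·|cos((p_1−p_2)/2)|)| ≤ C/N. -/
open Complex BigOperators Finset

namespace SpinChain

section
variable (N : ℕ) [NeZero N]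

lemma kinkConfig_inj (hN : Odd N) {a b : ZMod N} (h : kinkConfig N a = kinkConfig N b) : a = b := by
  rcases eq_or_ne N 1 with h1 | h1
  · subst h1; exact Subsingleton.elim a b
  have hN2 : 2 ≤ N := by
    rcases hN with ⟨k, hk⟩; omega
  -- evaluate at sites a and a+1
  have ha : kinkConfig N b a = true := by
    rw [← h]; simp [kinkConfig]
  have ha1 : kinkConfig N b (a + 1) = true := by
    rw [← h]
    simp only [kinkConfig, add_sub_cancel_left]
    rw [ZMod.val_one_eq_one_mod]
    simp [Nat.mod_eq_of_lt hN2]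
  set d := (a - b).val with hd
  have hdlt : d < N := ZMod.val_lt _
  have hcase : d = 0 ∨ d % 2 = 1 := by
    simpa [kinkConfig, hd] using ha
  rcases hcase with h0 | hodd
  · have : a - b = 0 := by
      rwa [← ZMod.val_eq_zero]
    linear_combination (norm := ring_nf) this
  · exfalso
    have hadd : (a + 1 - b).val = d + 1 := by
      have : a + 1 - b = (a - b) + 1 := by ring
      rw [this, ZMod.val_add, ZMod.val_one_eq_one_mod, Nat.mod_eq_of_lt hN2]
      have hdne : d ≠ N - 1 := by
        rcases hN with ⟨k, hk⟩
        intro hc; omega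
      have : d + 1 < N := by omega
      exact Nat.mod_eq_of_lt this
    have := ha1
    simp [kinkConfig, hadd] at this
    omega

lemma braket_kink (a b : ZMod N) (hN : Odd N) :
    braket N (kink N a) (kink N b) = if a = b then 1 else 0 := by
  unfold braket kink basis
  rw [Finset.sum_eq_single (kinkConfig N b)]
  · by_cases h : a = b
    · simp [h]
    · have : kinkConfig N b ≠ kinkConfig N a := fun hc => h ((kinkConfig_inj N hN hc).symm)
      simp [h, this]
  · intro t _ ht
    simp [ht]
  · intro ht; exact absurd (Finset.mem_univ _) ht

lemma sigmaX_kink (j m : ZMod N) :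
    sigmaX N j (kink N m) = sgn (kinkConfig N m j) • kink N m := by
  funext s
  simp only [sigmaX, LinearMap.coe_mk, AddHom.coe_mk, kink, basis, Pi.smul_apply, smul_eq_mul]
  by_cases h : s = kinkConfig N m
  · subst h; simp
  · simp [h]

end

section
variable (N : ℕ) [NeZero N]
set_option linter.unusedSectionVars false

lemma cast_succ_inj_s11 {m n : ℕ} (hm : m < N) (hn : n < N)
    (h : ((m + 1 : ℕ) : ZMod N) = ((n + 1 : ℕ) : ZMod N)) : m = n := by
  have h' : ((m : ℕ) : ZMod N) = ((n : ℕ) : ZMod N) := by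
    push_cast at h
    linear_combination h
  have := congrArg ZMod.val h'
  rwa [ZMod.val_cast_of_lt hm, ZMod.val_cast_of_lt hn] at this

lemma braket_sums (hN : Odd N) (a b : ℕ → ℂ) :
    braket N (∑ m ∈ Finset.range N, a m • kink N ((m + 1 : ℕ) : ZMod N))
             (∑ m ∈ Finset.range N, b m • kink N ((m + 1 : ℕ) : ZMod N)) =
    ∑ m ∈ Finset.range N, (starRingEnd ℂ) (a m) * b m := by
  unfold braket
  have key : ∀ s : Config N,
      (starRingEnd ℂ) ((∑ m ∈ Finset.range N, a m • kink N ((m+1:ℕ):ZMod N)) s) *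
        ((∑ m ∈ Finset.range N, b m • kink N ((m+1:ℕ):ZMod N)) s)
      = ∑ m ∈ Finset.range N, ∑ n ∈ Finset.range N,
          ((starRingEnd ℂ) (a m) * b n) *
            ((starRingEnd ℂ) (kink N ((m+1:ℕ):ZMod N) s) * kink N ((n+1:ℕ):ZMod N) s) := by
    intro s
    simp only [Finset.sum_apply, Pi.smul_apply, smul_eq_mul, map_sum, map_mul]
    rw [Finset.sum_mul_sum]
    exact Finset.sum_congr rfl fun m _ => Finset.sum_congr rfl fun n _ => by ring
  rw [Finset.sum_congr rfl fun s _ => key s, Finset.sum_comm]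
  refine Finset.sum_congr rfl fun m hm => ?_
  rw [Finset.sum_comm]
  have inner : ∀ n ∈ Finset.range N,
      (∑ s : Config N, ((starRingEnd ℂ) (a m) * b n) *
        ((starRingEnd ℂ) (kink N ((m+1:ℕ):ZMod N) s) * kink N ((n+1:ℕ):ZMod N) s))
      = ((starRingEnd ℂ) (a m) * b n) * (if m = n then 1 else 0) := by
    intro n hn
    rw [← Finset.mul_sum]
    congr 1
    have : (∑ s : Config N, (starRingEnd ℂ) (kink N ((m+1:ℕ):ZMod N) s) *
        kink N ((n+1:ℕ):ZMod N) s) = braket N (kink N ((m+1:ℕ):ZMod N)) (kink N ((n+1:ℕ):ZMod N)) := rfl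
    rw [this, braket_kink N _ _ hN]
    by_cases h : m = n
    · simp [h]
    · have h2 : ((m+1:ℕ):ZMod N) ≠ ((n+1:ℕ):ZMod N) := fun hc =>
        h (cast_succ_inj_s11 N (Finset.mem_range.mp hm) (Finset.mem_range.mp hn) hc)
      have h3 : ((m : ℕ) : ZMod N) ≠ ((n : ℕ) : ZMod N) := by
        intro hc
        apply h
        have := congrArg ZMod.val hc
        rwa [ZMod.val_cast_of_lt (Finset.mem_range.mp hm),
          ZMod.val_cast_of_lt (Finset.mem_range.mp hn)] at this
      simp [h, h2, h3]
  rw [Finset.sum_congr rfl inner]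
  simp [Finset.mul_sum, Finset.sum_ite_eq, hm]

-- sums over ZMod N vs range N
lemma sum_zmod (h : ZMod N → ℂ) :
    ∑ v : ZMod N, h v = ∑ m ∈ Finset.range N, h ((m : ℕ) : ZMod N) := by
  refine Finset.sum_nbij' (fun v => v.val) (fun m => ((m : ℕ) : ZMod N))
    (fun v _ => Finset.mem_range.mpr (ZMod.val_lt v))
    (fun m _ => Finset.mem_univ _)
    (fun v _ => ZMod.natCast_rightInverse v)
    (fun m hm => ZMod.val_cast_of_lt (Finset.mem_range.mp hm))
    (fun v _ => ?_)
  rw [ZMod.natCast_rightInverse v]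

lemma sum_range_succ_cast (h : ZMod N → ℂ) :
    ∑ m ∈ Finset.range N, h ((m + 1 : ℕ) : ZMod N) = ∑ v : ZMod N, h v := by
  have e1 : ∑ m ∈ Finset.range N, h ((m + 1 : ℕ) : ZMod N)
      = ∑ m ∈ Finset.range N, (fun v => h (v + 1)) ((m : ℕ) : ZMod N) := by
    refine Finset.sum_congr rfl fun m _ => ?_
    congr 1
    push_cast
    ring
  rw [e1]
  exact ((sum_zmod N fun v => h (v + 1)).symm).trans
    (Fintype.sum_equiv (Equiv.addRight (1 : ZMod N)) (fun v => h (v + 1)) h fun v => rfl)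

end

section
variable (N : ℕ) [NeZero N]
set_option linter.unusedSectionVars false

lemma pow_mod_eq {w : ℂ} (hw : w ^ N = 1) (a : ℕ) : w ^ a = w ^ (a % N) := by
  conv_lhs => rw [← Nat.div_add_mod a N]
  rw [pow_add, pow_mul, hw, one_pow, one_mul]

/-- the ±1 value as a function of the offset -/
noncomputable def epsc (n : ℕ) : ℂ := if n = 0 ∨ n % 2 = 1 then 1 else -1

lemma sgn_kink_offset (jz r : ZMod N) :
    sgn (kinkConfig N (jz - r) jz) = epsc r.val := by
  have h1 : jz - (jz - r) = r := by ring
  simp only [kinkConfig, h1, sgn, epsc]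
  by_cases h0 : r.val = 0
  · simp [h0]
  · by_cases h2 : r.val % 2 = 1 <;> simp [h0, h2]

lemma epsc_eq (n : ℕ) : epsc n = (if n = 0 then (2:ℂ) else 0) - (-1)^n := by
  rcases Nat.eq_zero_or_pos n with h | h
  · simp [h, epsc]
    norm_num
  · have hne : ¬ (n = 0) := by omega
    rcases Nat.even_or_odd n with he | ho
    · have h2 : ¬ (n % 2 = 1) := by have := Nat.even_iff.mp he; omega
      simp [epsc, hne, h2, he.neg_one_pow]
    · have h2 : n % 2 = 1 := Nat.odd_iff.mp ho
      simp [epsc, hne, h2, ho.neg_one_pow]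

lemma ofReal_cos_exp (x : ℝ) : ((Real.cos x : ℝ) : ℂ)
    = (Complex.exp (Complex.I * x) + Complex.exp (-(Complex.I * x))) / 2 := by
  rw [Complex.ofReal_cos]
  simp only [Complex.cos]
  congr 2
  · congr 1; ring
  · congr 1; ring

/-- The key geometric sum. -/
lemma kink_exp_sum (hN : Odd N) (Δ : ℝ) (K : ℤ) (hΔ : Δ * N = 2 * Real.pi * K)
    (hc : Real.cos (Δ / 2) ≠ 0) (j : ℕ) :
    ∑ m ∈ Finset.range N, sgn (kinkConfig N ((m + 1 : ℕ) : ZMod N) ((j : ℕ) : ZMod N)) *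
        Complex.exp (Complex.I * Δ * ((m : ℂ) + 1))
      = Complex.exp (Complex.I * Δ * j) * Complex.exp (-(Complex.I * Δ) / 2) /
          (Real.cos (Δ / 2) : ℂ) := by
  set jz : ZMod N := ((j : ℕ) : ZMod N) with hjz
  set w : ℂ := Complex.exp (Complex.I * Δ) with hwdef
  have hw0 : w ≠ 0 := Complex.exp_ne_zero _
  have hwN : w ^ N = 1 := by
    rw [hwdef, ← Complex.exp_nat_mul]
    have hcast : ((Δ * N : ℝ) : ℂ) = ((2 * Real.pi * K : ℝ) : ℂ) := by rw [hΔ]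
    push_cast at hcast
    have harg : (N : ℂ) * (Complex.I * Δ) = (K : ℂ) * (2 * (Real.pi : ℂ) * Complex.I) := by
      linear_combination Complex.I * hcast
    rw [harg, Complex.exp_int_mul_two_pi_mul_I]
  set z : ℂ := w⁻¹ with hzdef
  have hz0 : z ≠ 0 := inv_ne_zero hw0
  have hzN : z ^ N = 1 := by rw [hzdef, inv_pow, hwN, inv_one]
  have hzexp : z = Complex.exp (-(Complex.I * Δ)) := by
    rw [hzdef, hwdef, ← Complex.exp_neg]
  set E : ℂ := Complex.exp (-(Complex.I * Δ) / 2) with hEdef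
  have hE0 : E ≠ 0 := Complex.exp_ne_zero _
  have hzE : z = E * E := by
    rw [hzexp, hEdef, ← Complex.exp_add]
    congr 1; ring
  have hcosC : ((Real.cos (Δ / 2) : ℝ) : ℂ) ≠ 0 := Complex.ofReal_ne_zero.mpr hc
  have hz1 : (1 : ℂ) + z = 2 * (Real.cos (Δ / 2) : ℂ) * E := by
    have hcos2 := ofReal_cos_exp (Δ / 2)
    have hE' : Complex.exp (-(Complex.I * ((Δ / 2 : ℝ) : ℂ))) = E := by
      rw [hEdef]; congr 1; push_cast; ring
    have hu : Complex.exp (Complex.I * ((Δ / 2 : ℝ) : ℂ)) * E = 1 := by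
      rw [hEdef, ← Complex.exp_add]
      have : Complex.I * ((Δ / 2 : ℝ) : ℂ) + -(Complex.I * (Δ : ℂ)) / 2 = 0 := by
        push_cast; ring
      rw [this, Complex.exp_zero]
    rw [hzE, hcos2, hE']
    linear_combination -hu
  have h1z : (1 : ℂ) + z ≠ 0 := by
    rw [hz1]
    exact mul_ne_zero (mul_ne_zero two_ne_zero hcosC) hE0
  have hnz1 : (-z : ℂ) ≠ 1 := by
    intro h
    apply h1z
    linear_combination -h
  -- geometric sum
  have geo : ∑ m ∈ Finset.range N, (-z) ^ m = 2 / (1 + z) := by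
    rw [geom_sum_eq hnz1, hN.neg_pow, hzN]
    rw [div_eq_div_iff (by intro h; apply hnz1; linear_combination h) h1z]
    ring
  have hT : ∑ m ∈ Finset.range N, epsc m * z ^ m = 2 * z / (1 + z) := by
    have per : ∀ m ∈ Finset.range N, epsc m * z ^ m
        = (if m = 0 then (2:ℂ) else 0) - (-1 : ℂ)^m * z ^ m := by
      intro m _
      rcases eq_or_ne m 0 with h | h
      · subst h; simp [epsc]; norm_num
      · rw [epsc_eq]; simp [h]
    rw [Finset.sum_congr rfl per, Finset.sum_sub_distrib]
    have h2 : ∑ m ∈ Finset.range N, (if m = 0 then (2:ℂ) else 0) = 2 := by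
      rw [Finset.sum_ite_eq' (Finset.range N) 0 (fun _ => (2:ℂ))]
      simp [Nat.pos_of_ne_zero (NeZero.ne N)]
    have h3 : ∀ m, (-1 : ℂ)^m * z ^ m = (-z)^m := fun m => by rw [← neg_pow]
    rw [h2, Finset.sum_congr rfl (fun m _ => h3 m), geo]
    field_simp
    ring
  -- value of w powers through ZMod
  have hval : ∀ a : ℕ, w ^ ((a : ZMod N)).val = w ^ a := fun a => by
    rw [ZMod.val_natCast, ← pow_mod_eq N hwN]
  set F : ZMod N → ℂ := fun v => sgn (kinkConfig N v jz) * w ^ v.val with hF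
  have step1 : ∑ m ∈ Finset.range N, sgn (kinkConfig N ((m + 1 : ℕ) : ZMod N) jz) *
      Complex.exp (Complex.I * Δ * ((m : ℂ) + 1)) = ∑ m ∈ Finset.range N, F ((m + 1 : ℕ) : ZMod N) := by
    refine Finset.sum_congr rfl fun m _ => ?_
    rw [hF]
    simp only
    rw [hval (m+1)]
    congr 1
    rw [hwdef, ← Complex.exp_nat_mul]
    congr 1
    push_cast
    ring
  rw [step1, sum_range_succ_cast N F]
  have step3 : ∑ v : ZMod N, F v = ∑ r : ZMod N, F (jz - r) :=
    (Fintype.sum_equiv (Equiv.subLeft jz) (fun r => F (jz - r)) F (fun r => rfl)).symm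
  rw [step3]
  have step4 : ∀ r : ZMod N, F (jz - r) = w ^ j * (epsc r.val * z ^ r.val) := by
    intro r
    rw [hF]
    simp only
    rw [sgn_kink_offset N jz r]
    have hsum : w ^ ((jz - r).val) * w ^ r.val = w ^ j := by
      rw [← pow_add, pow_mod_eq N hwN ((jz-r).val + r.val), ← ZMod.val_add, sub_add_cancel,
        hjz, ZMod.val_natCast, ← pow_mod_eq N hwN j]
    have hw2 : w ^ ((jz - r).val) = w ^ j * (w ^ r.val)⁻¹ := by
      rw [eq_mul_inv_iff_mul_eq₀ (pow_ne_zero _ hw0)]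
      exact hsum
    rw [hw2, hzdef, inv_pow]
    ring
  rw [Finset.sum_congr rfl (fun r _ => step4 r), ← Finset.mul_sum]
  have step6 : ∑ r : ZMod N, epsc r.val * z ^ r.val = ∑ m ∈ Finset.range N, epsc m * z ^ m := by
    rw [sum_zmod N (fun v => epsc v.val * z ^ v.val)]
    refine Finset.sum_congr rfl fun m hm => ?_
    rw [ZMod.val_cast_of_lt (Finset.mem_range.mp hm)]
  rw [step6, hT]
  have hwj : w ^ j = Complex.exp (Complex.I * Δ * j) := by
    rw [hwdef, ← Complex.exp_nat_mul]
    congr 1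
    ring
  rw [hwj, hz1, hzE]
  rw [mul_comm (Complex.exp (Complex.I * Δ * j)) (2 * (E * E) / (2 * (Real.cos (Δ / 2) : ℂ) * E))]
  rw [div_mul_eq_mul_div, div_eq_div_iff (mul_ne_zero (mul_ne_zero two_ne_zero hcosC) hE0) hcosC]
  ring
end

lemma conj_exp_aux (a : ℝ) (x : ℂ) (hx : (starRingEnd ℂ) x = x) :
    (starRingEnd ℂ) (Complex.exp (Complex.I * (a : ℂ) * x)) =
      Complex.exp (-(Complex.I * (a : ℂ) * x)) := by
  rw [← Complex.exp_conj]
  congr 1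
  rw [map_mul, map_mul, Complex.conj_I, Complex.conj_ofReal, hx]
  ring

lemma term_core (t2 tN A Ab B Bb F Fb ε : ℂ)
    (hA : Ab * A = 1) (hB : Bb * B = 1) (hF : Fb * F = 1) :
    (t2 * (tN * (Ab + Fb * Bb))) * (ε * (t2 * (tN * (A + F * B))))
      = t2 * t2 * (tN * tN) * (2 * ε + Fb * (ε * (Bb * A)) + F * (ε * (Ab * B))) := by
  linear_combination (t2 * t2 * (tN * tN) * ε) * hA +
    (t2 * t2 * (tN * tN) * ε * Fb * F) * hB + (t2 * t2 * (tN * tN) * ε) * hF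


/-- For `|g⟩ = (|s_{p₁}⟩ + e^{iθ}|s_{p₂}⟩)/√2` there are a phase `θ'`
(depending only on `θ, p₁, p₂`) and a constant `C > 0` independent of `N`, `j` and `θ`
such that for every site `j ∈ {1,…,N}`:
`|⟨g|σ^x_j|g⟩ − cos((p₁−p₂)j + θ')/(N·|cos((p₁−p₂)/2)|)| ≤ C/N`. -/
theorem statement_11 :
    ∃ C : ℝ, 0 < C ∧
      ∀ (N : ℕ) [NeZero N], Odd N →
        ∀ k₁ k₂ : ℕ, k₁ < N → k₂ < N →
          ∀ p₁ p₂ : ℝ, p₁ = 2 * Real.pi * k₁ / N → p₂ = 2 * Real.pi * k₂ / N →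
            ∀ θ : ℝ, ∃ θ' : ℝ,
              ∀ g : HS N,
                g = (Real.sqrt 2 : ℂ)⁻¹ •
                    (momState N p₁ + Complex.exp (Complex.I * θ) • momState N p₂) →
                ∀ j : ℕ, 1 ≤ j → j ≤ N →
                  ‖braket N g (sigmaX N (j : ZMod N) g) -
                      ((Real.cos ((p₁ - p₂) * j + θ') /
                        (N * |Real.cos ((p₁ - p₂) / 2)|) : ℝ) : ℂ)‖ ≤ C / N := by
  refine ⟨1, one_pos, ?_⟩
  intro N _ hN k₁ k₂ hk₁ hk₂ p₁ p₂ hp₁ hp₂ θ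
  have hNpos : 0 < N := Nat.pos_of_ne_zero (NeZero.ne N)
  have hNR : (N : ℝ) ≠ 0 := Nat.cast_ne_zero.mpr (NeZero.ne N)
  set Δ : ℝ := p₁ - p₂ with hΔdef
  have hΔN : Δ * N = 2 * Real.pi * (((k₁ : ℤ) - (k₂ : ℤ) : ℤ) : ℝ) := by
    rw [hΔdef, hp₁, hp₂]
    push_cast
    field_simp
  have hΔN' : (-Δ) * N = 2 * Real.pi * (((k₂ : ℤ) - (k₁ : ℤ) : ℤ) : ℝ) := by
    push_cast at hΔN ⊢
    linarith
  set c : ℝ := Real.cos (Δ / 2) with hcdef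
  have hc : c ≠ 0 := by
    intro h
    rcases Real.cos_eq_zero_iff.mp h with ⟨n, hn⟩
    have hpi : Real.pi ≠ 0 := Real.pi_ne_zero
    have hΔeq : Δ = (2 * (n : ℝ) + 1) * Real.pi := by linarith [hn]
    have hr : ((2 * (n : ℝ) + 1) * N) * Real.pi
        = (2 * (((k₁ : ℤ) - k₂ : ℤ) : ℝ)) * Real.pi := by
      calc ((2 * (n : ℝ) + 1) * N) * Real.pi = Δ * N := by rw [hΔeq]; ring
        _ = (2 * (((k₁ : ℤ) - k₂ : ℤ) : ℝ)) * Real.pi := by rw [hΔN]; ring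
    have hr2 : ((2 * n + 1) * (N : ℤ) : ℤ) = 2 * ((k₁ : ℤ) - k₂) := by
      have := mul_right_cancel₀ hpi hr
      exact_mod_cast this
    have hoddN : Odd (N : ℤ) := by
      obtain ⟨t, ht⟩ := hN
      exact ⟨(t : ℤ), by push_cast [ht]; ring⟩
    have hodd : Odd ((2 * n + 1) * (N : ℤ)) := (odd_two_mul_add_one n).mul hoddN
    rw [hr2] at hodd
    exact ((Int.not_odd_iff_even).mpr ⟨(k₁ : ℤ) - k₂, by ring⟩) hodd
  have hcneg : Real.cos ((-Δ) / 2) = c := by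
    rw [hcdef, show (-Δ) / 2 = -(Δ / 2) by ring, Real.cos_neg]
  set θ' : ℝ := if 0 < c then -θ - Δ / 2 else -θ - Δ / 2 + Real.pi with hθ'def
  refine ⟨θ', ?_⟩
  intro g hg j hj1 hj2
  set coef : ℕ → ℂ := fun m => (Real.sqrt 2 : ℂ)⁻¹ *
      ((Real.sqrt N : ℂ)⁻¹ * (Complex.exp (Complex.I * p₁ * ((m : ℂ) + 1)) +
        Complex.exp (Complex.I * θ) * Complex.exp (Complex.I * p₂ * ((m : ℂ) + 1)))) with hcoef
  have hg' : g = ∑ m ∈ Finset.range N, coef m • kink N ((m + 1 : ℕ) : ZMod N) := by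
    rw [hg]
    unfold momState
    simp only [Finset.smul_sum, smul_smul, smul_add]
    rw [← Finset.sum_add_distrib]
    refine Finset.sum_congr rfl fun m _ => ?_
    rw [← add_smul]
    congr 1
    rw [hcoef]
    ring
  set eps : ℕ → ℂ := fun m => sgn (kinkConfig N ((m + 1 : ℕ) : ZMod N) ((j : ℕ) : ZMod N))
    with heps
  have hσ : sigmaX N ((j : ℕ) : ZMod N) g
      = ∑ m ∈ Finset.range N, (eps m * coef m) • kink N ((m + 1 : ℕ) : ZMod N) := by
    rw [hg', map_sum]
    refine Finset.sum_congr rfl fun m _ => ?_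
    rw [LinearMap.map_smul, sigmaX_kink, smul_smul, mul_comm]
  have hbk : braket N g (sigmaX N ((j : ℕ) : ZMod N) g)
      = ∑ m ∈ Finset.range N, (starRingEnd ℂ) (coef m) * (eps m * coef m) := by
    rw [hσ, hg']
    exact braket_sums N hN coef (fun m => eps m * coef m)
  have hNC : (N : ℂ) ≠ 0 := Nat.cast_ne_zero.mpr (NeZero.ne N)
  have hs2 : ((Real.sqrt 2 : ℝ) : ℂ)⁻¹ * ((Real.sqrt 2 : ℝ) : ℂ)⁻¹ * 2 = 1 := by
    have h2c : ((Real.sqrt 2 : ℝ) : ℂ) * ((Real.sqrt 2 : ℝ) : ℂ) = 2 := by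
      rw [← Complex.ofReal_mul, Real.mul_self_sqrt (by norm_num)]
      norm_num
    have hne : ((Real.sqrt 2 : ℝ) : ℂ) ≠ 0 := by
      intro h; rw [h, mul_zero] at h2c; norm_num at h2c
    field_simp
    linear_combination -h2c
  have hsN : ((Real.sqrt N : ℝ) : ℂ)⁻¹ * ((Real.sqrt N : ℝ) : ℂ)⁻¹ * (N : ℂ) = 1 := by
    have h2c : ((Real.sqrt N : ℝ) : ℂ) * ((Real.sqrt N : ℝ) : ℂ) = (N : ℂ) := by
      rw [← Complex.ofReal_mul, Real.mul_self_sqrt (Nat.cast_nonneg N)]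
      norm_num
    have hne : ((Real.sqrt N : ℝ) : ℂ) ≠ 0 := by
      intro h; rw [h, mul_zero] at h2c; exact hNC h2c.symm
    field_simp
    linear_combination -h2c
  have hterm : ∀ m ∈ Finset.range N, (starRingEnd ℂ) (coef m) * (eps m * coef m)
      = ((N : ℂ)⁻¹ * 2⁻¹) * (2 * eps m
          + Complex.exp (-(Complex.I * θ)) *
              (eps m * Complex.exp (Complex.I * (Δ : ℝ) * ((m : ℂ) + 1)))
          + Complex.exp (Complex.I * θ) *
              (eps m * Complex.exp (Complex.I * ((-Δ : ℝ) : ℝ) * ((m : ℂ) + 1)))) := by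
    intro m _
    have hx : (starRingEnd ℂ) ((m : ℂ) + 1) = (m : ℂ) + 1 := by
      rw [map_add, Complex.conj_natCast, map_one]
    have hcc : (starRingEnd ℂ) (coef m) = (Real.sqrt 2 : ℂ)⁻¹ *
        ((Real.sqrt N : ℂ)⁻¹ * (Complex.exp (-(Complex.I * p₁ * ((m : ℂ) + 1))) +
          Complex.exp (-(Complex.I * θ)) * Complex.exp (-(Complex.I * p₂ * ((m : ℂ) + 1))))) := by
      rw [hcoef]
      simp only [map_mul, map_add, map_inv₀, Complex.conj_ofReal]
      rw [conj_exp_aux p₁ _ hx, conj_exp_aux p₂ _ hx]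
      congr 2
      rw [← Complex.exp_conj]
      congr 1
      rw [map_mul, Complex.conj_I, Complex.conj_ofReal]
      ring
    have hA : Complex.exp (-(Complex.I * p₁ * ((m : ℂ) + 1))) *
        Complex.exp (Complex.I * p₁ * ((m : ℂ) + 1)) = 1 := by
      rw [← Complex.exp_add]; simp
    have hB : Complex.exp (-(Complex.I * p₂ * ((m : ℂ) + 1))) *
        Complex.exp (Complex.I * p₂ * ((m : ℂ) + 1)) = 1 := by
      rw [← Complex.exp_add]; simp
    have hF : Complex.exp (-(Complex.I * θ)) * Complex.exp (Complex.I * θ) = 1 := by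
      rw [← Complex.exp_add]; simp
    have hBA : Complex.exp (-(Complex.I * p₂ * ((m : ℂ) + 1))) *
        Complex.exp (Complex.I * p₁ * ((m : ℂ) + 1))
        = Complex.exp (Complex.I * (Δ : ℝ) * ((m : ℂ) + 1)) := by
      rw [← Complex.exp_add]
      congr 1
      rw [hΔdef]
      push_cast
      ring
    have hAB : Complex.exp (-(Complex.I * p₁ * ((m : ℂ) + 1))) *
        Complex.exp (Complex.I * p₂ * ((m : ℂ) + 1))
        = Complex.exp (Complex.I * ((-Δ : ℝ) : ℝ) * ((m : ℂ) + 1)) := by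
      rw [← Complex.exp_add]
      congr 1
      rw [hΔdef]
      push_cast
      ring
    rw [hcc, hcoef, ← hBA, ← hAB]
    rw [term_core _ _ _ _ _ _ _ _ _ hA hB hF]
    have hconst : ((Real.sqrt 2 : ℝ) : ℂ)⁻¹ * ((Real.sqrt 2 : ℝ) : ℂ)⁻¹ *
        (((Real.sqrt N : ℝ) : ℂ)⁻¹ * ((Real.sqrt N : ℝ) : ℂ)⁻¹) = (N : ℂ)⁻¹ * 2⁻¹ := by
      have h1 : ((Real.sqrt 2 : ℝ) : ℂ)⁻¹ * ((Real.sqrt 2 : ℝ) : ℂ)⁻¹ = 2⁻¹ := by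
        linear_combination (2 : ℂ)⁻¹ * hs2
      have h2 : ((Real.sqrt N : ℝ) : ℂ)⁻¹ * ((Real.sqrt N : ℝ) : ℂ)⁻¹ = (N : ℂ)⁻¹ := by
        field_simp
        linear_combination hsN
      rw [h1, h2]
      ring
    rw [hconst]
  -- the three sums
  have hS0 : ∑ m ∈ Finset.range N, eps m = 1 := by
    have h := kink_exp_sum N hN 0 0 (by norm_num) (by simp) j
    simpa [heps] using h
  have hSp : ∑ m ∈ Finset.range N, eps m * Complex.exp (Complex.I * (Δ : ℝ) * ((m : ℂ) + 1))
      = Complex.exp (Complex.I * (Δ : ℝ) * j) * Complex.exp (-(Complex.I * (Δ : ℝ)) / 2)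
        / ((c : ℝ) : ℂ) := by
    have h := kink_exp_sum N hN Δ ((k₁ : ℤ) - k₂) hΔN hc j
    rw [heps]
    exact h
  have hSm : ∑ m ∈ Finset.range N, eps m * Complex.exp (Complex.I * ((-Δ : ℝ) : ℝ) * ((m : ℂ) + 1))
      = Complex.exp (Complex.I * ((-Δ : ℝ) : ℝ) * j) * Complex.exp (-(Complex.I * ((-Δ : ℝ) : ℝ)) / 2)
        / ((c : ℝ) : ℂ) := by
    have h := kink_exp_sum N hN (-Δ) ((k₂ : ℤ) - k₁) hΔN' (by rw [hcneg]; exact hc) j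
    rw [heps]
    rw [h, hcneg]
  have hsum : braket N g (sigmaX N ((j : ℕ) : ZMod N) g)
      = ((N : ℂ)⁻¹ * 2⁻¹) * (2 * 1
          + Complex.exp (-(Complex.I * θ)) * (Complex.exp (Complex.I * (Δ : ℝ) * j) *
              Complex.exp (-(Complex.I * (Δ : ℝ)) / 2) / ((c : ℝ) : ℂ))
          + Complex.exp (Complex.I * θ) * (Complex.exp (Complex.I * ((-Δ : ℝ) : ℝ) * j) *
              Complex.exp (-(Complex.I * ((-Δ : ℝ) : ℝ)) / 2) / ((c : ℝ) : ℂ))) := by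
    rw [hbk, Finset.sum_congr rfl hterm, ← Finset.mul_sum]
    congr 1
    rw [Finset.sum_add_distrib, Finset.sum_add_distrib, ← Finset.mul_sum, ← Finset.mul_sum,
      ← Finset.mul_sum, hS0, hSp, hSm]
  set x : ℝ := Δ * j - Δ / 2 - θ with hxdef
  have hexp1 : Complex.exp (-(Complex.I * θ)) * (Complex.exp (Complex.I * (Δ : ℝ) * j) *
      Complex.exp (-(Complex.I * (Δ : ℝ)) / 2)) = Complex.exp (Complex.I * (x : ℝ)) := by
    rw [← Complex.exp_add, ← Complex.exp_add]
    congr 1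
    rw [hxdef]
    push_cast
    ring
  have hexp2 : Complex.exp (Complex.I * θ) * (Complex.exp (Complex.I * ((-Δ : ℝ) : ℝ) * j) *
      Complex.exp (-(Complex.I * ((-Δ : ℝ) : ℝ)) / 2)) = Complex.exp (-(Complex.I * (x : ℝ))) := by
    rw [← Complex.exp_add, ← Complex.exp_add]
    congr 1
    rw [hxdef]
    push_cast
    ring
  have hcC : ((c : ℝ) : ℂ) ≠ 0 := Complex.ofReal_ne_zero.mpr hc
  have hmain : braket N g (sigmaX N ((j : ℕ) : ZMod N) g)
      = ((1 / N + Real.cos x / (N * c) : ℝ) : ℂ) := by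
    rw [hsum]
    have hcos := ofReal_cos_exp x
    simp only [Complex.ofReal_add, Complex.ofReal_div, Complex.ofReal_mul,
      Complex.ofReal_one, Complex.ofReal_natCast]
    linear_combination ((N : ℂ)⁻¹ * 2⁻¹ * ((c : ℝ) : ℂ)⁻¹) * hexp1
      + ((N : ℂ)⁻¹ * 2⁻¹ * ((c : ℝ) : ℂ)⁻¹) * hexp2
      - ((N : ℂ)⁻¹ * ((c : ℝ) : ℂ)⁻¹) * hcos
  have hθ'cos : Real.cos (Δ * j + θ') / (N * |c|) = Real.cos x / (N * c) := by
    rcases lt_or_gt_of_ne hc with hneg | hpos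
    · rw [hθ'def, if_neg (not_lt.mpr hneg.le)]
      have harg : Δ * j + (-θ - Δ / 2 + Real.pi) = x + Real.pi := by rw [hxdef]; ring
      rw [harg, Real.cos_add_pi, abs_of_neg hneg]
      have hNc : (N : ℝ) * c ≠ 0 := mul_ne_zero hNR hc
      have hNc' : (N : ℝ) * -c ≠ 0 := by
        simpa using mul_ne_zero hNR (neg_ne_zero.mpr hc)
      rw [div_eq_div_iff hNc' hNc]
      ring
    · rw [hθ'def, if_pos hpos, abs_of_pos hpos]
      congr 2
      rw [hxdef]
      ring
  rw [hmain]
  have hgoal : ((1 / N + Real.cos x / (N * c) : ℝ) : ℂ) -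
      ((Real.cos (Δ * j + θ') / (N * |c|) : ℝ) : ℂ) = (((1 : ℝ) / N : ℝ) : ℂ) := by
    rw [hθ'cos]
    push_cast
    ring
  rw [hgoal, Complex.norm_real, Real.norm_eq_abs, _root_.abs_of_nonneg (by positivity)]

end SpinChain
end

section
/- For every integer j one has cos(2πmj/N) ≥ −cos(πg/N), and there exists j ∈ {0,1,…,N−1} for which equality holds; i.e., the minimum of f(j) = cos(2πmj/N) over j ∈ {0,1,…,N−1} equals −cos(πg/N). -/
open Real

private lemma cos_congr_mod (N : ℕ) (hN : 0 < N) (a b : ℤ) (h : a ≡ b [ZMOD (N:ℤ)]) :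
    Real.cos (2 * π * a / N) = Real.cos (2 * π * b / N) := by
  obtain ⟨t, ht⟩ := h.dvd
  have hN' : (N : ℝ) ≠ 0 := Nat.cast_ne_zero.mpr hN.ne'
  have hb : (b : ℝ) = (a : ℝ) + (N : ℝ) * (t : ℝ) := by
    have : (b : ℝ) - a = (N : ℝ) * t := by exact_mod_cast ht
    linarith
  have : 2 * π * b / N = 2 * π * a / N + (t : ℝ) * (2 * π) := by
    rw [hb]; field_simp
  rw [this, Real.cos_add_int_mul_two_pi]

private lemma key_half (n : ℕ) (hn0 : 0 < n) (r : ℕ) (hr : 2 * r + 1 ≤ n) :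
    Real.cos (π - π / n) ≤ Real.cos (2 * π * r / n) := by
  have hnr : (0:ℝ) < n := Nat.cast_pos.mpr hn0
  have hrn : (2 * (r:ℝ) + 1) ≤ n := by exact_mod_cast hr
  apply Real.cos_le_cos_of_nonneg_of_le_pi
  · positivity
  · have : 0 < π / n := by positivity
    linarith
  · rw [div_le_iff₀ hnr, sub_mul, div_mul_cancel₀ _ hnr.ne']
    nlinarith [Real.pi_pos]

private lemma key (n : ℕ) (hn : Odd n) (r : ℕ) (hr : r < n) :
    Real.cos (π - π / n) ≤ Real.cos (2 * π * r / n) := by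
  have hn0 : 0 < n := hn.pos
  have hnr : (0:ℝ) < n := Nat.cast_pos.mpr hn0
  rcases le_or_gt (2 * r + 1) n with h | h
  · exact key_half n hn0 r h
  · have hne : n ≠ 2 * r := fun he => (Nat.not_odd_iff_even.mpr ⟨r, by omega⟩) (he ▸ hn)
    have h2 : 2 * (n - r) + 1 ≤ n := by omega
    have hcast : ((n - r : ℕ) : ℝ) = (n : ℝ) - r := by
      push_cast [Nat.cast_sub hr.le]; ring
    have heq : 2 * π * r / n = 2 * π - 2 * π * ((n - r : ℕ) : ℝ) / n := by
      rw [hcast]; field_simp; ring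
    rw [heq, Real.cos_two_pi_sub]
    exact key_half n hn0 (n - r) h2

/-- For `N` odd, `0 < m < N`, `g = gcd(N,m)`: for every integer `j`,
`cos(2πmj/N) ≥ −cos(πg/N)`, and equality is attained for some `j ∈ {0,…,N−1}`;
i.e. the minimum of `f(j) = cos(2πmj/N)` over `{0,…,N−1}` equals `−cos(πg/N)`. -/
theorem statement_13 (N m : ℕ) (hN : Odd N) (hN0 : 0 < N) (hm0 : 0 < m) (hmN : m < N)
    (g : ℕ) (hg : g = Nat.gcd N m) :
    (∀ j : ℤ, -Real.cos (Real.pi * g / N) ≤ Real.cos (2 * Real.pi * m * j / N)) ∧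
    (∃ j ∈ Finset.range N,
      Real.cos (2 * Real.pi * m * j / N) = -Real.cos (Real.pi * g / N)) := by
  have hgN : g ∣ N := hg ▸ Nat.gcd_dvd_left N m
  have hgm : g ∣ m := hg ▸ Nat.gcd_dvd_right N m
  have hg0 : 0 < g := hg ▸ Nat.gcd_pos_of_pos_left m hN0
  obtain ⟨n, hn⟩ := hgN
  obtain ⟨m', hm'⟩ := hgm
  have hnodd : Odd n := (Nat.odd_mul.mp (hn ▸ hN)).2
  have hn0 : 0 < n := hnodd.pos
  have hgR : (0:ℝ) < g := Nat.cast_pos.mpr hg0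
  have hnR : (0:ℝ) < n := Nat.cast_pos.mpr hn0
  have hNR : (0:ℝ) < N := Nat.cast_pos.mpr hN0
  have hNcast : (N : ℝ) = g * n := by exact_mod_cast congrArg (Nat.cast : ℕ → ℝ) hn
  have hmcast : (m : ℝ) = g * m' := by exact_mod_cast congrArg (Nat.cast : ℕ → ℝ) hm'
  have hπgN : Real.pi * g / N = π / n := by
    rw [hNcast]; field_simp
  constructor
  · intro j
    have hratio : (2 * π * m * j / N : ℝ) = 2 * π * ((m' * j : ℤ) : ℝ) / n := by
      rw [hNcast, hmcast]; push_cast; field_simp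
    set r : ℤ := (m' * j) % n with hrdef
    have hr0 : 0 ≤ r := Int.emod_nonneg _ (by exact_mod_cast hn0.ne')
    have hrn : r < n := Int.emod_lt_of_pos _ (by exact_mod_cast hn0)
    have hmodeq : (m' * j : ℤ) ≡ r [ZMOD (n:ℤ)] := (Int.emod_emod_of_dvd _ dvd_rfl).symm
    have hrtn : ((r.toNat : ℤ) : ℝ) = (r : ℝ) := by
      rw [Int.toNat_of_nonneg hr0]
    have hrtn' : r.toNat < n := by omega
    rw [hratio, cos_congr_mod n hn0 _ r hmodeq, hπgN, ← Real.cos_pi_sub]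
    have := key n hnodd r.toNat hrtn'
    rw [show ((r.toNat : ℕ) : ℝ) = (r : ℝ) by exact_mod_cast hrtn] at this
    exact this
  · set k : ℕ := (n - 1) / 2 with hk
    have h2k : 2 * k + 1 = n := by
      obtain ⟨c, hc⟩ := hnodd; omega
    set b : ℤ := Nat.gcdB N m with hb
    have hbez : (g : ℤ) = N * Nat.gcdA N m + m * b := by
      rw [hg]; exact Nat.gcd_eq_gcd_ab N m
    set J : ℤ := (b * k) % N with hJ
    have hJ0 : 0 ≤ J := Int.emod_nonneg _ (by exact_mod_cast hN0.ne')
    have hJN : J < N := Int.emod_lt_of_pos _ (by exact_mod_cast hN0)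
    refine ⟨J.toNat, Finset.mem_range.mpr (by omega), ?_⟩
    have hmod1 : (J : ℤ) ≡ b * k [ZMOD (N:ℤ)] := Int.emod_emod_of_dvd _ dvd_rfl
    have hmod2 : ((m : ℤ) * b) ≡ (g : ℤ) [ZMOD (N:ℤ)] := by
      apply Int.ModEq.symm
      rw [Int.modEq_iff_dvd]
      exact ⟨-Nat.gcdA N m, by linarith [hbez]⟩
    have hmod : ((m : ℤ) * J) ≡ (g : ℤ) * k [ZMOD (N:ℤ)] := by
      calc (m : ℤ) * J ≡ (m : ℤ) * (b * k) [ZMOD (N:ℤ)] := hmod1.mul_left _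
        _ = ((m : ℤ) * b) * k := by ring
        _ ≡ (g : ℤ) * k [ZMOD (N:ℤ)] := hmod2.mul_right _
    have hrw : (2 * π * m * (J.toNat : ℕ) / N : ℝ) = 2 * π * (((m : ℤ) * J : ℤ) : ℝ) / N := by
      have : ((J.toNat : ℕ) : ℝ) = (J : ℝ) := by exact_mod_cast Int.toNat_of_nonneg hJ0
      rw [this]; push_cast; ring
    rw [hrw, cos_congr_mod N hN0 _ _ hmod]
    have h2kR : 2 * (k : ℝ) + 1 = n := by exact_mod_cast h2k
    have hfin : (2 * π * (((g : ℤ) * k : ℤ) : ℝ) / N : ℝ) = π - π / n := by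
      rw [hNcast]; push_cast
      field_simp
      linear_combination h2kR
    rw [hfin, Real.cos_pi_sub, hπgN]
end

section
/- The function f(j) = cos(2πmj/N) attains its minimal value over {0,1,…,N−1}, which equals −cos(πg/N), at exactly 2g points of the set {0,1,…,N−1}. -/
open scoped Classical in
lemma count_sol (N m g n c : ℕ) (hg : g = Nat.gcd N m) (hN : N = g * n)
    (hn0 : 0 < n) (hm0 : 0 < m) (hgc : g ∣ c) (hc : c < N) :
    ((Finset.range N).filter (fun j => (m * j) % N = c)).card = g := by
  haveI : NeZero n := ⟨hn0.ne'⟩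
  have hg0 : 0 < g := by
    rw [hg]; exact Nat.gcd_pos_of_pos_right _ hm0
  have hgm : g ∣ m := hg ▸ Nat.gcd_dvd_right N m
  set m' := m / g with hm'
  set c' := c / g with hc'
  have hmm : m = g * m' := (Nat.mul_div_cancel' hgm).symm
  have hcc : c = g * c' := (Nat.mul_div_cancel' hgc).symm
  have hco : Nat.Coprime m' n := by
    have := Nat.coprime_div_gcd_div_gcd (m := N) (n := m) (by rw [← hg]; exact hg0)
    have hn : n = N / g := by rw [hN]; exact (Nat.mul_div_cancel_left n hg0).symm
    rw [hn, hm', hg]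
    exact (this.symm)
  set u : (ZMod n)ˣ := ZMod.unitOfCoprime m' hco with hu
  set j₀ : ℕ := (((u⁻¹ : (ZMod n)ˣ) : ZMod n) * (c' : ZMod n)).val with hj₀def
  have hj₀ : j₀ < n := ZMod.val_lt _
  have hkey : m' * j₀ ≡ c' [MOD n] := by
    rw [← ZMod.natCast_eq_natCast_iff]
    push_cast
    rw [hj₀def, ZMod.natCast_val, ZMod.cast_id]
    have : ((m' : ZMod n)) = (u : ZMod n) := (ZMod.coe_unitOfCoprime m' hco).symm
    rw [this, ← mul_assoc, ← Units.val_mul, mul_inv_cancel, Units.val_one, one_mul]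
  have hiff : ∀ j, j < N → ((m * j) % N = c ↔ j % n = j₀) := by
    intro j hj
    constructor
    · intro h
      have h1 : m * j ≡ c [MOD N] := by
        unfold Nat.ModEq; rw [h, Nat.mod_eq_of_lt hc]
      have h2 : m' * j ≡ c' [MOD n] := by
        apply Nat.ModEq.mul_left_cancel' hg0.ne'
        rw [← hN] at *
        calc g * (m' * j) = m * j := by rw [hmm]; ring
          _ ≡ c [MOD N] := h1
          _ = g * c' := hcc
      have h3 : m' * j ≡ m' * j₀ [MOD n] := h2.trans hkey.symm
      have h4 : j ≡ j₀ [MOD n] :=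
        Nat.ModEq.cancel_left_of_coprime (by rwa [Nat.coprime_comm] at hco) h3
      unfold Nat.ModEq at h4
      rwa [Nat.mod_eq_of_lt hj₀] at h4
    · intro h
      have h4 : j ≡ j₀ [MOD n] := by
        unfold Nat.ModEq; rw [h, Nat.mod_eq_of_lt hj₀]
      have h2 : m' * j ≡ c' [MOD n] := (h4.mul_left m').trans hkey
      have h1 : m * j ≡ c [MOD N] := by
        rw [hmm, hcc, hN, mul_assoc]
        exact h2.mul_left' g
      unfold Nat.ModEq at h1
      rwa [Nat.mod_eq_of_lt hc] at h1
  have hset : (Finset.range N).filter (fun j => (m * j) % N = c)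
      = (Finset.range g).image (fun t => j₀ + t * n) := by
    ext j
    simp only [Finset.mem_filter, Finset.mem_range, Finset.mem_image]
    constructor
    · rintro ⟨hjN, hj⟩
      refine ⟨j / n, ?_, ?_⟩
      · rw [Nat.div_lt_iff_lt_mul hn0, ← hN]; exact hjN
      · rw [← (hiff j hjN).1 hj]; exact Nat.mod_add_div' j n
    · rintro ⟨t, ht, rfl⟩
      have hjN : j₀ + t * n < N := by
        calc j₀ + t * n < n + t * n := by omega
          _ = (t + 1) * n := by ring
          _ ≤ g * n := Nat.mul_le_mul_right n (by omega)
          _ = N := hN.symm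
      refine ⟨hjN, (hiff _ hjN).2 ?_⟩
      rw [Nat.add_mul_mod_self_right, Nat.mod_eq_of_lt hj₀]
  rw [hset, Finset.card_image_of_injective _ (fun a b hab =>
    Nat.eq_of_mul_eq_mul_right hn0 (Nat.add_left_cancel hab)), Finset.card_range]

open Real in
lemma cos_bound (n : ℕ) (hn : Odd n) (hn3 : 3 ≤ n) (k : ℕ) (hk : k < n) :
    -Real.cos (π / n) ≤ Real.cos (2 * π * k / n) ∧
    (Real.cos (2 * π * k / n) = -Real.cos (π / n) ↔ 2 * k + 1 = n ∨ 2 * k = n + 1) := by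
  obtain ⟨k₀, hk₀⟩ := hn
  have hn0 : (0:ℝ) < n := by positivity
  have hcast : (n:ℝ) = 2 * k₀ + 1 := by rw [hk₀]; push_cast; ring
  have hT : -Real.cos (π / n) = Real.cos (2 * π * k₀ / n) := by
    rw [← Real.cos_pi_sub]
    congr 1
    field_simp
    linear_combination hcast
  have key : ∀ a : ℕ, a ≤ k₀ →
      Real.cos (2 * π * k₀ / n) ≤ Real.cos (2 * π * a / n) ∧
      (Real.cos (2 * π * a / n) = Real.cos (2 * π * k₀ / n) ↔ a = k₀) := by
    intro a ha
    rcases eq_or_lt_of_le ha with rfl | hlt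
    · simp
    · have h2a : (2 * a : ℝ) ≤ n := by exact_mod_cast (show (2*a : ℕ) ≤ n by omega)
      have h2k : (2 * k₀ : ℝ) ≤ n := by exact_mod_cast (show (2*k₀ : ℕ) ≤ n by omega)
      have hmem1 : (2 * π * a / n) ∈ Set.Icc 0 π := by
        refine ⟨by positivity, ?_⟩
        rw [div_le_iff₀ hn0]; nlinarith [pi_pos]
      have hmem2 : (2 * π * k₀ / n) ∈ Set.Icc 0 π := by
        refine ⟨by positivity, ?_⟩
        rw [div_le_iff₀ hn0]; nlinarith [pi_pos]
      have hak : (a:ℝ) < k₀ := by exact_mod_cast hlt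
      have hlt' : (2 * π * a / n) < 2 * π * k₀ / n := by
        apply div_lt_div_of_pos_right ?_ hn0
        nlinarith [pi_pos]
      have hstrict := Real.strictAntiOn_cos hmem1 hmem2 hlt'
      exact ⟨hstrict.le, ⟨fun h => absurd h hstrict.ne', fun h => by rw [h]⟩⟩
  rcases le_or_gt k k₀ with hle | hgt
  · obtain ⟨hb, he⟩ := key k hle
    refine ⟨by rw [hT]; exact hb, ?_⟩
    rw [hT, he]
    omega
  · set a := n - k with hadef
    have hak : a ≤ k₀ := by omega
    have hna : (a:ℝ) = (n:ℝ) - k := by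
      rw [hadef]; push_cast [Nat.cast_sub hk.le]; ring
    have hco : Real.cos (2 * π * k / n) = Real.cos (2 * π * a / n) := by
      rw [← Real.cos_two_pi_sub]
      congr 1
      rw [hna]
      field_simp
    obtain ⟨hb, he⟩ := key a hak
    refine ⟨by rw [hco, hT]; exact hb, ?_⟩
    rw [hco, hT, he]
    omega

open scoped Classical in
/-- For `N` odd, `0 < m < N`, `g = gcd(N,m)`, the function
`f(j) = cos(2πmj/N)` attains its minimal value over `{0,…,N−1}`, which equals
`−cos(πg/N)`, at exactly `2g` points of `{0,…,N−1}`. -/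
theorem statement_14 (N m : ℕ) (hN : Odd N) (hN0 : 0 < N) (hm0 : 0 < m) (hmN : m < N)
    (g : ℕ) (hg : g = Nat.gcd N m) :
    (∀ j ∈ Finset.range N,
      -Real.cos (Real.pi * g / N) ≤ Real.cos (2 * Real.pi * m * j / N)) ∧
    ((Finset.range N).filter
        (fun j => Real.cos (2 * Real.pi * m * j / N) = -Real.cos (Real.pi * g / N))).card =
      2 * g := by
  have hg0 : 0 < g := by rw [hg]; exact Nat.gcd_pos_of_pos_right _ hm0
  have hgN : g ∣ N := hg ▸ Nat.gcd_dvd_left N m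
  have hgm : g ∣ m := hg ▸ Nat.gcd_dvd_right N m
  set n := N / g with hndef
  have hN' : N = g * n := (Nat.mul_div_cancel' hgN).symm
  have hnodd : Odd n := (Nat.odd_mul.mp (hN' ▸ hN)).2
  have hgm' : g ≤ m := hg ▸ Nat.le_of_dvd hm0 (Nat.gcd_dvd_right N m)
  have hn2 : 1 < n := by
    by_contra h
    push_neg at h
    interval_cases n
    · omega
    · omega
  have hn3 : 3 ≤ n := by
    obtain ⟨t, ht⟩ := hnodd; omega
  have hn0 : 0 < n := by omega
  have hNr : (N:ℝ) = (g:ℝ) * n := by exact_mod_cast hN'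
  have hgr : (0:ℝ) < g := by positivity
  have hnr : (0:ℝ) < n := by positivity
  have hπ : Real.pi * g / N = Real.pi / n := by
    rw [hNr]; field_simp
  -- pointwise reduction
  have hpt : ∀ j : ℕ, ∃ k : ℕ, k < n ∧ (m * j) % N = g * k ∧
      Real.cos (2 * Real.pi * m * j / N) = Real.cos (2 * Real.pi * k / n) := by
    intro j
    set r := (m * j) % N with hrdef
    have hgr' : g ∣ r := (Nat.dvd_mod_iff hgN).mpr (hgm.mul_right j)
    refine ⟨r / g, ?_, (Nat.mul_div_cancel' hgr').symm, ?_⟩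
    · have hrN : r < N := Nat.mod_lt _ hN0
      rw [hN'] at hrN
      exact Nat.div_lt_of_lt_mul hrN
    · set q := (m * j) / N with hqdef
      have hsplit : (m * j : ℕ) = N * q + r := (Nat.div_add_mod (m * j) N).symm
      have hsplitr : ((m:ℝ) * j) = (N:ℝ) * q + r := by exact_mod_cast hsplit
      have h1 : 2 * Real.pi * m * j / N = 2 * Real.pi * r / N + (q : ℤ) * (2 * Real.pi) := by
        have hNr0 : (N:ℝ) ≠ 0 := by positivity
        push_cast
        field_simp
        linear_combination hsplitr
      rw [h1, Real.cos_add_int_mul_two_pi]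
      congr 1
      have hrg : (r:ℝ) = (g:ℝ) * (r / g : ℕ) := by
        exact_mod_cast (Nat.mul_div_cancel' hgr').symm
      rw [hrg, hNr]
      field_simp
  constructor
  · intro j hj
    obtain ⟨k, hk, -, hcos⟩ := hpt j
    rw [hπ, hcos]
    exact (cos_bound n hnodd hn3 k hk).1
  · have hSet : ((Finset.range N : Finset ℕ) >>= (fun a => (pure ((a:ℝ)) : Finset ℝ)))
        = (Finset.range N).image (fun j : ℕ => (j:ℝ)) := by
      simp only [Finset.bind_def, Finset.pure_def, Finset.sup_singleton_apply]
    rw [hSet, Finset.filter_image,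
      Finset.card_image_of_injective _ (Nat.cast_injective : Function.Injective (Nat.cast : ℕ → ℝ))]
    set k₁ := (n - 1) / 2 with hk₁def
    set k₂ := (n + 1) / 2 with hk₂def
    obtain ⟨t, ht⟩ := id hnodd
    have hfe : (Finset.range N).filter
        (fun j : ℕ => Real.cos (2 * Real.pi * m * j / N) = -Real.cos (Real.pi * g / N))
        = (Finset.range N).filter
        (fun j => (m * j) % N = g * k₁ ∨ (m * j) % N = g * k₂) := by
      apply Finset.filter_congr
      intro j hj
      obtain ⟨k, hk, hr, hcos⟩ := hpt j
      rw [hπ, hcos, (cos_bound n hnodd hn3 k hk).2, hr]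
      constructor
      · rintro (h | h)
        · left; congr 1; omega
        · right; congr 1; omega
      · rintro (h | h)
        · left
          have : k = k₁ := Nat.eq_of_mul_eq_mul_left hg0 h
          omega
        · right
          have : k = k₂ := Nat.eq_of_mul_eq_mul_left hg0 h
          omega
    rw [hfe, Finset.filter_or, Finset.card_union_of_disjoint, two_mul]
    · congr 1
      · exact count_sol N m g n (g * k₁) hg hN' hn0 hm0 (dvd_mul_right g k₁)
          (by rw [hN']; exact (Nat.mul_lt_mul_left hg0).mpr (by omega))
      · exact count_sol N m g n (g * k₂) hg hN' hn0 hm0 (dvd_mul_right g k₂)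
          (by rw [hN']; exact (Nat.mul_lt_mul_left hg0).mpr (by omega))
    · rw [Finset.disjoint_left]
      intro j hj1 hj2
      simp only [Finset.mem_filter] at hj1 hj2
      have : g * k₁ = g * k₂ := by rw [← hj1.2, hj2.2]
      have := Nat.eq_of_mul_eq_mul_left hg0 this
      omega
end
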